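/- arXiv:1610.01686 — 6 statements merged into one kernel-verified Lean document; each statement's English description precedes it below -/
import Mathlib

section
/- The number of partitions that are simultaneously s-core and (s+1)-core and have distinct parts equals the (s+1)-st Fibonacci number F_{s+1} (with F_1 = F_2 = 1). -/
/-- A partition: a weakly decreasing list of positive integers. -/
def IsPartition (l : List ℕ) : Prop :=
  l.Pairwise (· ≥ ·) ∧ ∀ x ∈ l, 0 < x

/-- Hook length at the cell in row `i`, column `j` (0-indexed). -/
def hookLength (l : List ℕ) (i j : ℕ) : ℕ :=
  (l.getD i 0 - j - 1) + ((l.filter (fun x => j < x)).length - i - 1) + 1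

/-- The Young diagram of `l` contains a hook of length `h`. -/
def HasHook (l : List ℕ) (h : ℕ) : Prop :=
  ∃ i j, j < l.getD i 0 ∧ hookLength l i j = h

/-- `l` is an `s`-core: no hook of length `s`. -/
def IsCore (s : ℕ) (l : List ℕ) : Prop := ¬ HasHook l s

/-- The conjugate (transpose) partition. -/
def conjugate (l : List ℕ) : List ℕ :=
  (List.range (l.headD 0)).map (fun j => (l.filter (fun x => j < x)).length)

def SelfConjugate (l : List ℕ) : Prop := conjugate l = l

/-- The staircase partition `(k, k-1, …, 1)`. -/
def staircase (k : ℕ) : List ℕ := (List.range k).map (fun i => k - i)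

/-- The minimal bead set: the set of first-column hook lengths. -/
def beadSet (l : List ℕ) : Finset ℕ :=
  (Finset.range l.length).image (fun i => l.getD i 0 + (l.length - 1 - i))

namespace FibCoreAux

lemma mem_le_headD {l : List ℕ} (h : l.Pairwise (· ≥ ·)) {x : ℕ} (hx : x ∈ l) :
    x ≤ l.headD 0 := by
  rcases l with _ | ⟨a, t⟩
  · simp at hx
  · rcases List.mem_cons.mp hx with rfl | hx
    · simp
    · exact (List.pairwise_cons.mp h).1 x hx

lemma getD_le_headD {l : List ℕ} (h : l.Pairwise (· ≥ ·)) (i : ℕ) :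
    l.getD i 0 ≤ l.headD 0 := by
  rcases Nat.lt_or_ge i l.length with hi | hi
  · rw [List.getD_eq_getElem l 0 hi]
    exact mem_le_headD h (List.getElem_mem hi)
  · rw [List.getD_eq_default l 0 hi]
    exact Nat.zero_le _

lemma hookLength_le {l : List ℕ} (h : l.Pairwise (· ≥ ·)) {i j : ℕ} (hij : j < l.getD i 0) :
    hookLength l i j + 1 ≤ l.headD 0 + l.length := by
  have h1 : l.getD i 0 ≤ l.headD 0 := getD_le_headD h i
  have h2 : (l.filter (fun x => j < x)).length ≤ l.length := List.length_filter_le _ _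
  have hi : i < l.length := by
    by_contra h'
    rw [List.getD_eq_default l 0 (by omega)] at hij
    omega
  unfold hookLength
  omega

lemma small_isCore {l : List ℕ} (h : l.Pairwise (· ≥ ·)) {t : ℕ}
    (ht : l.headD 0 + l.length ≤ t) : IsCore t l := by
  rintro ⟨i, j, hij, he⟩
  have := hookLength_le h hij
  omega

/-- In a strictly decreasing list, entries drop by at least the index gap. -/
lemma get_gap {l : List ℕ} (h : l.Pairwise (· > ·)) :
    ∀ d i, i + d < l.length → l.getD (i + d) 0 + d ≤ l.getD i 0 := by
  intro d
  induction d with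
  | zero => intro i hi; simp
  | succ d ih =>
    intro i hi
    have h1 := ih (i + 1) (by omega)
    have h2 : l.getD (i + 1) 0 < l.getD i 0 := by
      have := List.pairwise_iff_get.mp h ⟨i, by omega⟩ ⟨i + 1, by omega⟩ (by simp)
      rw [List.getD_eq_getElem l 0 (show i + 1 < l.length by omega),
        List.getD_eq_getElem l 0 (show i < l.length by omega)]
      simpa [List.get_eq_getElem] using this
    rw [show i + (d + 1) = i + 1 + d by omega]
    omega

/-- `m` is a first-column hook length of a row other than the first. -/
def Qp (l : List ℕ) (m : ℕ) : Prop :=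
  ∃ i, 1 ≤ i ∧ i < l.length ∧ l.getD i 0 + (l.length - 1 - i) = m

lemma not_Qp_consec {l : List ℕ} (h : l.Pairwise (· > ·)) (m : ℕ) :
    ¬ (Qp l m ∧ Qp l (m + 1)) := by
  rintro ⟨⟨j, hj1, hj2, hj3⟩, ⟨i, hi1, hi2, hi3⟩⟩
  rcases Nat.lt_trichotomy i j with hlt | rfl | hlt
  · have := get_gap h (j - i) i (by omega)
    rw [show i + (j - i) = j by omega] at this
    omega
  · omega
  · have := get_gap h (i - j) j (by omega)
    rw [show j + (i - j) = i by omega] at this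
    omega

/-- Number of parts bigger than `c`. -/
def fl (l : List ℕ) (c : ℕ) : ℕ := (l.filter (fun x => c < x)).length

lemma fl_eq_countP (l : List ℕ) (c : ℕ) :
    fl l c = l.countP (fun x => decide (c < x)) := by
  rw [fl, List.countP_eq_length_filter]

lemma fl_le_length (l : List ℕ) (c : ℕ) : fl l c ≤ l.length :=
  List.length_filter_le _ _

lemma fl_antitone (l : List ℕ) (c : ℕ) : fl l (c + 1) ≤ fl l c := by
  rw [fl_eq_countP, fl_eq_countP]
  apply List.countP_mono_left
  intro x _ hx
  simp only [decide_eq_true_eq] at hx ⊢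
  omega

lemma countP_split (c : ℕ) (l : List ℕ) :
    l.countP (fun x => decide (c < x)) ≤
      l.countP (fun x => decide (c + 1 < x)) + l.count (c + 1) := by
  induction l with
  | nil => simp
  | cons a t ih =>
    simp only [List.countP_cons, List.count_cons, beq_iff_eq]
    by_cases h1 : c < a <;> by_cases h2 : c + 1 < a <;> by_cases h3 : a = c + 1 <;>
      simp [h1, h2, h3] <;> omega

lemma fl_lower {l : List ℕ} (hnd : l.Nodup) (c : ℕ) : fl l c ≤ fl l (c + 1) + 1 := by
  have h1 := countP_split c l
  have h2 : l.count (c + 1) ≤ 1 := List.nodup_iff_count_le_one.mp hnd _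
  rw [fl_eq_countP, fl_eq_countP]
  omega

lemma fl_mem {l : List ℕ} {c : ℕ} (h : fl l c ≠ fl l (c + 1)) : (c + 1) ∈ l := by
  by_contra hm
  have h1 : fl l c ≤ fl l (c + 1) := by
    rw [fl_eq_countP, fl_eq_countP]
    apply List.countP_mono_left
    intro x hx hcx
    simp only [decide_eq_true_eq] at hcx ⊢
    have : x ≠ c + 1 := fun he => hm (he ▸ hx)
    omega
  have h2 := fl_antitone l c
  omega

lemma fl_zero {l : List ℕ} (hpos : ∀ x ∈ l, 0 < x) : fl l 0 = l.length := by
  rw [fl_eq_countP]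
  rw [List.countP_eq_length]
  intro a ha
  simpa using hpos a ha

lemma headD_mem {l : List ℕ} (hne : l ≠ []) : l.headD 0 ∈ l := by
  rcases l with _ | ⟨a, t⟩
  · simp at hne
  · simp

lemma fl_pos {l : List ℕ} (hne : l ≠ []) {c : ℕ} (hc : c < l.headD 0) : 1 ≤ fl l c := by
  rw [fl_eq_countP]
  rw [Nat.one_le_iff_ne_zero, Ne, List.countP_eq_zero]
  push_neg
  exact ⟨l.headD 0, headD_mem hne, by simpa using hc⟩

lemma fl_head {l : List ℕ} (h : l.Pairwise (· > ·)) (hne : l ≠ [])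
    (hpos : ∀ x ∈ l, 0 < x) : fl l (l.headD 0 - 1) = 1 := by
  rcases l with _ | ⟨a, t⟩
  · simp at hne
  · have ha : 0 < a := hpos a (by simp)
    have ht : ∀ x ∈ t, x < a := fun x hx => (List.pairwise_cons.mp h).1 x hx
    rw [fl_eq_countP]
    simp only [List.headD_cons, List.countP_cons]
    have h1 : t.countP (fun x => decide (a - 1 < x)) = 0 := by
      rw [List.countP_eq_zero]
      intro x hx
      have := ht x hx
      simp only [decide_eq_true_eq]
      omega
    erw [h1]
    erw [if_pos (show decide (a - 1 < a) = true by simp only [decide_eq_true_eq]; omega)]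

/-- Key surjectivity: any value `m < h₀` which is not a lower first-column hook
length is realised as `h₀ - (hook length of a first-row cell)`. -/
lemma exists_cell {l : List ℕ} (h : l.Pairwise (· > ·)) (hpos : ∀ x ∈ l, 0 < x)
    (hne : l ≠ []) (hnd : l.Nodup) {m : ℕ} (hm : m + 1 < l.headD 0 + l.length)
    (hQ : ¬ Qp l m) :
    ∃ c, c < l.headD 0 ∧ hookLength l 0 c + m + 1 = l.headD 0 + l.length := by
  set H := l.headD 0 with hH
  set k := l.length with hk
  have hH1 : 1 ≤ H := hpos _ (headD_mem hne)
  have hk1 : 1 ≤ k := by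
    rcases l with _ | ⟨a, t⟩
    · simp at hne
    · simp [hk]
  set g : ℕ → ℕ := fun c => c + (k - fl l c) with hg
  have hg0 : g 0 = 0 := by simp [hg, fl_zero hpos, hk]
  set c₀ := Nat.findGreatest (fun c => g c ≤ m) (H - 1) with hc₀
  have hc₀le : g c₀ ≤ m :=
    Nat.findGreatest_spec (P := fun c => g c ≤ m) (Nat.zero_le _) (by show g 0 ≤ m; rw [hg0]; exact Nat.zero_le _)
  have hc₀top : c₀ ≤ H - 1 := Nat.findGreatest_le _
  have hgtop : g (H - 1) = H - 1 + (k - 1) := by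
    have hfh : fl l (H - 1) = 1 := fl_head h hne hpos
    simp [hg, hfh]
  have hgetD0 : l.getD 0 0 = H := by
    rcases l with _ | ⟨a, t⟩
    · simp at hne
    · simp [hH]
  by_cases heq : g c₀ = m
  · refine ⟨c₀, by omega, ?_⟩
    have hfl1 : 1 ≤ fl l c₀ := fl_pos hne (by omega)
    have hfl2 : fl l c₀ ≤ k := fl_le_length l c₀
    have hgc : c₀ + (k - fl l c₀) = m := heq
    show (l.getD 0 0 - c₀ - 1) + ((l.filter (fun x => c₀ < x)).length - 0 - 1) + 1 + m + 1 = H + k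
    rw [hgetD0]
    show (H - c₀ - 1) + (fl l c₀ - 0 - 1) + 1 + m + 1 = H + k
    omega
  · exfalso
    apply hQ
    have h1 : g c₀ < m := lt_of_le_of_ne hc₀le heq
    have hc₀netop : c₀ ≠ H - 1 := by
      intro he
      rw [he, hgtop] at h1
      omega
    have h2 : ¬ (g (c₀ + 1) ≤ m) :=
      Nat.findGreatest_is_greatest (P := fun c => g c ≤ m) (n := H - 1) (by omega) (by omega)
    have ha1 : fl l (c₀ + 1) ≤ fl l c₀ := fl_antitone l c₀
    have ha2 : fl l c₀ ≤ fl l (c₀ + 1) + 1 := fl_lower hnd c₀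
    have ha3 : fl l c₀ ≤ k := fl_le_length l c₀
    have ha4 : 1 ≤ fl l c₀ := fl_pos hne (by omega)
    -- the step must be 2, skipping exactly m
    have hstep : fl l c₀ = fl l (c₀ + 1) + 1 := by
      by_contra hc
      have : fl l c₀ = fl l (c₀ + 1) := by omega
      simp only [hg] at h1 h2
      omega
    have hmval : m = c₀ + 1 + (k - fl l c₀) := by
      simp only [hg] at h1 h2
      omega
    have hmem : (c₀ + 1) ∈ l := fl_mem (by omega)
    obtain ⟨l₁, l₂, hdecomp⟩ := List.append_of_mem hmem
    have hpw := hdecomp ▸ h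
    rw [List.pairwise_append] at hpw
    obtain ⟨hpw1, hpw2, hpw3⟩ := hpw
    have hl₂ : ∀ x ∈ l₂, x < c₀ + 1 := fun x hx => (List.pairwise_cons.mp hpw2).1 x hx
    have hl₁ : ∀ x ∈ l₁, c₀ + 1 < x := fun x hx => hpw3 x hx (c₀ + 1) (by simp)
    -- fl l c₀ = l₁.length + 1
    have hflc : fl l c₀ = l₁.length + 1 := by
      rw [fl_eq_countP, hdecomp, List.countP_append, List.countP_cons]
      have e1 : l₁.countP (fun x => decide (c₀ < x)) = l₁.length := by
        rw [List.countP_eq_length]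
        intro a ha
        have := hl₁ a ha
        simp only [decide_eq_true_eq]
        omega
      have e2 : l₂.countP (fun x => decide (c₀ < x)) = 0 := by
        rw [List.countP_eq_zero]
        intro a ha
        have := hl₂ a ha
        simp only [decide_eq_true_eq]
        omega
      rw [e1, e2]
      simp
    have hklen : k = l₁.length + 1 + l₂.length := by
      rw [hk, hdecomp]
      simp
      omega
    have hl₁ne : l₁ ≠ [] := by
      intro he
      rw [he] at hdecomp
      simp at hdecomp
      have : H = c₀ + 1 := by rw [hH, hdecomp]; simp
      omega
    refine ⟨l₁.length, ?_, by omega, ?_⟩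
    · rcases l₁ with _ | ⟨b, t⟩
      · simp at hl₁ne
      · simp
    · have hget : l.getD l₁.length 0 = c₀ + 1 := by
        rw [hdecomp, List.getD_append_right _ _ _ _ (le_refl _)]
        simp
      rw [hget]
      omega

/-- Hard direction: a distinct-parts partition which is both an `s`-core
and an `(s+1)`-core has `head + length ≤ s`. -/
lemma core_imp_small {s : ℕ} (hs : 1 ≤ s) {l : List ℕ} (h : l.Pairwise (· > ·))
    (hpos : ∀ x ∈ l, 0 < x) (hnd : l.Nodup)
    (hc : IsCore s l) (hc2 : IsCore (s + 1) l) :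
    l.headD 0 + l.length ≤ s := by
  by_contra hbig
  push_neg at hbig
  set H := l.headD 0 with hH
  set k := l.length with hk
  have hne : l ≠ [] := by
    intro he
    have e1 : H = 0 := by rw [hH, he]; rfl
    have e2 : k = 0 := by rw [hk, he]; rfl
    omega
  have hH1 : 1 ≤ H := hpos _ (headD_mem hne)
  have hk1 : 1 ≤ k := by
    rcases l with _ | ⟨a, t⟩
    · simp at hne
    · simp [hk]
  have hgetD0 : l.getD 0 0 = H := by
    rcases l with _ | ⟨a, t⟩
    · simp at hne
    · simp [hH]
  -- h₀ = H + k - 1 ≥ s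
  by_cases hcase : H + k = s + 1
  -- h₀ = s : the corner cell has hook s
  · apply hc
    have hQ0 : ¬ Qp l 0 := by
      rintro ⟨i, hi1, hi2, hi3⟩
      have : 0 < l.getD i 0 := by
        rw [List.getD_eq_getElem l 0 hi2]
        exact hpos _ (List.getElem_mem hi2)
      omega
    obtain ⟨c, hc1, hc2'⟩ := exists_cell h hpos hne hnd (m := 0) (by omega) hQ0
    exact ⟨0, c, by omega, by omega⟩
  · have hbig2 : s + 2 ≤ H + k := by omega
    set m1 := H + k - 2 - s with hm1
    have hnotboth := not_Qp_consec h m1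
    by_cases hq1 : Qp l m1
    · -- then ¬ Qp l (m1+1); hook of length s
      apply hc
      have hq2 : ¬ Qp l (m1 + 1) := fun hq => hnotboth ⟨hq1, hq⟩
      obtain ⟨c, hc1, hc2'⟩ := exists_cell h hpos hne hnd (m := m1 + 1) (by omega) hq2
      exact ⟨0, c, by omega, by omega⟩
    · -- hook of length s+1
      apply hc2
      obtain ⟨c, hc1, hc2'⟩ := exists_cell h hpos hne hnd (m := m1) (by omega) hq1
      exact ⟨0, c, by omega, by omega⟩

/-- The full characterisation. -/
lemma char {s : ℕ} (hs : 1 ≤ s) (l : List ℕ) :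
    (IsPartition l ∧ l.Nodup ∧ IsCore s l ∧ IsCore (s + 1) l) ↔
      (l.Pairwise (· > ·) ∧ (∀ x ∈ l, 0 < x) ∧ l.headD 0 + l.length ≤ s) := by
  constructor
  · rintro ⟨⟨hsort, hpos⟩, hnd, hc1, hc2⟩
    have hpw : l.Pairwise (· > ·) := by
      have := hsort.and hnd
      exact this.imp (fun {a b} hab => lt_of_le_of_ne hab.1.le (Ne.symm hab.2))
    exact ⟨hpw, hpos, core_imp_small hs hpw hpos hnd hc1 hc2⟩
  · rintro ⟨hpw, hpos, hsmall⟩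
    have hsort : l.Pairwise (· ≥ ·) := hpw.imp (fun {a b} hab => le_of_lt hab)
    refine ⟨⟨hsort, hpos⟩, hpw.imp (fun {a b} hab => Nat.ne_of_gt hab), ?_, ?_⟩
    · exact small_isCore hsort hsmall
    · exact small_isCore hsort (by omega)

/-- The counting set. -/
def A (s : ℕ) : Set (List ℕ) :=
  {l | l.Pairwise (· > ·) ∧ (∀ x ∈ l, 0 < x) ∧ l.headD 0 + l.length ≤ s}

lemma A_zero : A 0 = {([] : List ℕ)} := by
  ext l
  simp only [A, Set.mem_setOf_eq, Set.mem_singleton_iff]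
  constructor
  · rintro ⟨_, _, hle⟩
    rcases l with _ | ⟨a, t⟩
    · rfl
    · simp at hle
  · rintro rfl
    simp

lemma A_one : A 1 = {([] : List ℕ)} := by
  ext l
  simp only [A, Set.mem_setOf_eq, Set.mem_singleton_iff]
  constructor
  · rintro ⟨_, hpos, hle⟩
    rcases l with _ | ⟨a, t⟩
    · rfl
    · have := hpos a (by simp)
      simp at hle
      omega
  · rintro rfl
    simp

lemma A_step (s : ℕ) :
    A (s + 2) = A (s + 1) ∪ (fun t => (s + 1 - t.length) :: t) '' A s := by
  ext l
  simp only [A, Set.mem_union, Set.mem_setOf_eq, Set.mem_image]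
  constructor
  · rintro ⟨hpw, hpos, hle⟩
    by_cases hsm : l.headD 0 + l.length ≤ s + 1
    · exact Or.inl ⟨hpw, hpos, hsm⟩
    · right
      have hexact : l.headD 0 + l.length = s + 2 := by omega
      rcases l with _ | ⟨a, t⟩
      · simp at hexact
      · have hat : a + (t.length + 1) = s + 2 := by
          simp only [List.headD_cons, List.length_cons] at hexact
          exact hexact
        have hpw' := List.pairwise_cons.mp hpw
        refine ⟨t, ⟨hpw'.2, fun x hx => hpos x (by simp [hx]), ?_⟩, ?_⟩
        · rcases t with _ | ⟨b, u⟩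
          · simp
          · have hba : b < a := hpw'.1 b (by simp)
            simp only [List.headD_cons, List.length_cons] at hat ⊢
            omega
        · have : s + 1 - t.length = a := by omega
          rw [this]
  · rintro (⟨hpw, hpos, hle⟩ | ⟨t, ⟨hpw, hpos, hle⟩, rfl⟩)
    · exact ⟨hpw, hpos, by omega⟩
    · have htlen : t.length ≤ s := by omega
      have hhead : ∀ x ∈ t, x < s + 1 - t.length := by
        intro x hx
        have := mem_le_headD (hpw.imp (fun {a b} hab => le_of_lt hab)) hx
        omega
      refine ⟨List.pairwise_cons.mpr ⟨hhead, hpw⟩, ?_, ?_⟩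
      · intro x hx
        rcases List.mem_cons.mp hx with rfl | hx
        · omega
        · exact hpos x hx
      · simp only [List.headD_cons, List.length_cons]
        omega

lemma A_count (s : ℕ) : (A s).Finite ∧ (A s).ncard = Nat.fib (s + 1) := by
  induction s using Nat.twoStepInduction with
  | zero => rw [A_zero]; exact ⟨Set.finite_singleton _, by simp⟩
  | one => rw [A_one]; exact ⟨Set.finite_singleton _, by simp⟩
  | more s ih1 ih2 =>
    obtain ⟨hf1, hc1⟩ := ih1
    obtain ⟨hf2, hc2⟩ := ih2
    have hinj : Set.InjOn (fun t => (s + 1 - t.length) :: t) (A s) := by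
      intro a _ b _ hab
      simpa using congrArg List.tail hab
    have hdisj : Disjoint (A (s + 1)) ((fun t => (s + 1 - t.length) :: t) '' A s) := by
      rw [Set.disjoint_left]
      rintro l ⟨_, _, hle⟩ ⟨t, ⟨_, _, hle'⟩, rfl⟩
      simp only [List.headD_cons, List.length_cons] at hle
      omega
    rw [A_step]
    constructor
    · exact hf2.union (hf1.image _)
    · rw [Set.ncard_union_eq hdisj hf2 (hf1.image _), hc2,
        Set.ncard_image_of_injOn hinj, hc1]
      have hfib : Nat.fib (s + 1 + 2) = Nat.fib (s + 1) + Nat.fib (s + 1 + 1) :=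
        Nat.fib_add_two
      show Nat.fib (s + 1 + 1) + Nat.fib (s + 1) = Nat.fib (s + 1 + 2)
      omega

end FibCoreAux

theorem fib_count_distinct_cores (s : ℕ) (hs : 1 ≤ s) :
    {l : List ℕ | IsPartition l ∧ l.Nodup ∧ IsCore s l ∧ IsCore (s + 1) l}.ncard
      = Nat.fib (s + 1) := by
  have hset : {l : List ℕ | IsPartition l ∧ l.Nodup ∧ IsCore s l ∧ IsCore (s + 1) l}
      = FibCoreAux.A s := by
    ext l
    rw [Set.mem_setOf_eq, FibCoreAux.char hs l]
    rfl
  rw [hset]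
  exact (FibCoreAux.A_count s).2
end

section
/- For m, s ≥ 1, let E⁻_m(s) denote the number of partitions with distinct parts that are simultaneously s-core and (ms−1)-core. Then E⁻_m(1) = 1, E⁻_m(2) = m, and for s ≥ 3, E⁻_m(s) = E⁻_m(s−1) + m·E⁻_m(s−2). -/
/-- prefix property of filters of sorted (decreasing) lists, for monotone predicates -/
lemma sorted_filter_prefix : ∀ (l : List ℕ), l.Pairwise (· ≥ ·) →
    ∀ (p : ℕ → Bool), (∀ a b : ℕ, a ≤ b → p a = true → p b = true) →
    ∀ k, k < l.length → (p (l.getD k 0) = true ↔ k < (l.filter p).length)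
  | [], _, _, _, k, hk => by simp at hk
  | x :: xs, hs, p, hp, k, hk => by
    have hxs : xs.Pairwise (· ≥ ·) := hs.of_cons
    have hx : ∀ y ∈ xs, y ≤ x := fun y hy => List.rel_of_pairwise_cons hs hy
    by_cases hpx : p x = true
    · cases k with
      | zero => simpa [hpx] using Nat.succ_pos _
      | succ k =>
        have hk' : k < xs.length := by simpa using hk
        have := sorted_filter_prefix xs hxs p hp k hk'
        simpa [List.filter_cons, hpx, Nat.succ_lt_succ_iff] using this
    · have hnil : xs.filter p = [] := by
        apply List.filter_eq_nil_iff.mpr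
        intro y hy
        intro hpy
        exact hpx (hp y x (hx y hy) hpy)
      have hfil : (x :: xs).filter p = [] := by
        simp [List.filter_cons, hpx, hnil]
      rw [hfil]
      simp only [List.length_nil, Nat.not_lt_zero, iff_false]
      cases k with
      | zero => simpa using hpx
      | succ k =>
        have hk' : k < xs.length := by simpa using hk
        intro hcon
        have : xs.getD k 0 ∈ xs := by
          rw [List.getD_eq_getElem _ _ hk']; exact List.getElem_mem _
        exact hpx (hp _ x (hx _ this) (by simpa using hcon))
lemma mem_beadSet {l : List ℕ} {x : ℕ} :
    x ∈ beadSet l ↔ ∃ i, i < l.length ∧ x = l.getD i 0 + (l.length - 1 - i) := by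
  simp [beadSet, Finset.mem_image, Finset.mem_range, eq_comm]

section
variable {l : List ℕ} (hs : l.Pairwise (· ≥ ·))

/-- values at indices are monotone -/
lemma getD_mono (hs : l.Pairwise (· ≥ ·)) {i k : ℕ} (hik : i ≤ k) (hk : k < l.length) :
    l.getD k 0 ≤ l.getD i 0 := by
  rcases Nat.eq_or_lt_of_le hik with rfl | hik'
  · exact le_refl _
  · have hi : i < l.length := lt_trans hik' hk
    rw [List.getD_eq_getElem _ _ hi, List.getD_eq_getElem _ _ hk]
    exact List.pairwise_iff_getElem.mp hs i k hi hk hik'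

/-- the filter count for `j < ·` -/
lemma lt_getD_iff (hs : l.Pairwise (· ≥ ·)) {j k : ℕ} (hk : k < l.length) :
    j < l.getD k 0 ↔ k < ((l.filter (fun x => j < x)).length) := by
  have := sorted_filter_prefix l hs (fun x => decide (j < x))
    (fun a b hab ha => by simp at ha ⊢; omega) k hk
  simpa using this

lemma hasHook_iff_bead (hs : l.Pairwise (· ≥ ·)) (h : ℕ) :
    HasHook l h ↔ ∃ b ∈ beadSet l, h ≤ b ∧ b - h ∉ beadSet l := by
  set n := l.length with hn
  constructor
  · rintro ⟨i, j, hj, hhook⟩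
    have hi : i < n := by
      by_contra hc
      rw [List.getD_eq_default] at hj; omega
      omega
    set c := ((l.filter (fun x => j < x)).length) with hc
    have hcn : c ≤ n := List.length_filter_le _ _
    have hic : i < c := (lt_getD_iff hs hi).mp hj
    refine ⟨l.getD i 0 + (n - 1 - i), mem_beadSet.mpr ⟨i, hi, rfl⟩, ?_, ?_⟩
    · rw [← hhook]; unfold hookLength
      rw [← hc]; omega
    · rw [mem_beadSet]
      rintro ⟨k, hk, hkeq⟩
      -- b - h = j + (n - c)
      have hbh : l.getD i 0 + (n - 1 - i) - h = j + (n - c) := by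
        rw [← hhook]; unfold hookLength; rw [← hc]; omega
      rw [hbh] at hkeq
      by_cases hkc : k < c
      · have : j < l.getD k 0 := (lt_getD_iff hs hk).mpr hkc
        omega
      · have : ¬ j < l.getD k 0 := fun hcon => hkc ((lt_getD_iff hs hk).mp hcon)
        omega
  · rintro ⟨b, hb, hhb, hnb⟩
    obtain ⟨i, hi, hbeq⟩ := mem_beadSet.mp hb
    have hh1 : 1 ≤ h := by
      rcases Nat.eq_zero_or_pos h with rfl | h1
      · exact absurd (by simpa using hb) (by simpa using hnb)
      · exact h1
    set x := b - h with hx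
    -- the b-list
    set bl : List ℕ := (List.range n).map (fun i => l.getD i 0 + (n - 1 - i)) with hbl
    have hbl_len : bl.length = n := by simp [hbl]
    have hbl_getD : ∀ k, k < n → bl.getD k 0 = l.getD k 0 + (n - 1 - k) := by
      intro k hk
      rw [hbl, List.getD_eq_getElem _ _ (by simpa using hk)]
      simp
    have hbl_sorted : bl.Pairwise (· ≥ ·) := by
      rw [List.pairwise_iff_getElem]
      intro a c ha hc hac
      have hc2 : c < n := by rw [hbl_len] at hc; exact hc
      simp only [hbl, List.getElem_map, List.getElem_range]
      have h1 : l.getD c 0 ≤ l.getD a 0 := getD_mono hs (le_of_lt hac) (by omega)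
      simp only [ge_iff_le]
      omega
    set r := ((bl.filter (fun v => x ≤ v)).length) with hr
    have hrn : r ≤ n := le_trans (List.length_filter_le _ _) (le_of_eq hbl_len)
    have hmemr : ∀ k, k < n → (x ≤ bl.getD k 0 ↔ k < r) := by
      intro k hk
      have := sorted_filter_prefix bl hbl_sorted (fun v => decide (x ≤ v))
        (fun a b hab ha => by simp at ha ⊢; omega) k (by omega)
      simpa using this
    have hir : i < r := by
      rw [← hmemr i hi, hbl_getD i hi, ← hbeq]; omega
    -- q ≤ x
    have hqx : n - r ≤ x := by
      rcases Nat.lt_or_ge r n with hrn' | hrn'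
      · have hbr : ¬ x ≤ bl.getD r 0 := fun hcon => by
          have := (hmemr r hrn').mp hcon; omega
        rw [hbl_getD r hrn'] at hbr
        omega
      · omega
    set j := x - (n - r) with hj
    have hr1 : r - 1 < n := by omega
    have hxbr1 : x < l.getD (r-1) 0 + (n - 1 - (r-1)) := by
      have h1 : x ≤ bl.getD (r-1) 0 := (hmemr (r-1) hr1).mpr (by omega)
      rw [hbl_getD _ hr1] at h1
      have h2 : x ≠ l.getD (r-1) 0 + (n - 1 - (r-1)) := by
        intro hcon
        exact hnb (mem_beadSet.mpr ⟨r-1, hr1, hcon⟩)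
      omega
    have hjlr : j < l.getD (r-1) 0 := by omega
    have hjli : j < l.getD i 0 := lt_of_lt_of_le hjlr (getD_mono hs (by omega) (by omega))
    -- c_j = r
    set c := ((l.filter (fun v => j < v)).length) with hc
    have hcn : c ≤ n := List.length_filter_le _ _
    have hkey : ∀ k, k < n → (j < l.getD k 0 ↔ k < r) := by
      intro k hk
      constructor
      · intro hcon
        by_contra hkr
        -- k ≥ r : show l_k ≤ j
        have hkr' : r ≤ k := by omega
        have hrn' : r < n := by omega
        have hbr : ¬ x ≤ bl.getD r 0 := fun hcon2 => by
          have := (hmemr r hrn').mp hcon2; omega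
        rw [hbl_getD r hrn'] at hbr
        -- b_k + (k - r) ≤ b_r, i.e. l_k + (n-1-k) + (k-r) ≤ l_r + (n-1-r)
        have hmono : l.getD k 0 ≤ l.getD r 0 := getD_mono hs hkr' hk
        omega
      · intro hkr
        exact lt_of_lt_of_le hjlr (getD_mono hs (by omega) (by omega))
    have hcr : c = r := by
      by_contra hne
      rcases Nat.lt_or_ge c r with hlt | hgt
      · have h1 : j < l.getD c 0 := (hkey c (by omega)).mpr hlt
        have := (lt_getD_iff hs (show c < n by omega)).mp h1
        omega
      · have hrc : r < c := by omega
        have h1 : j < l.getD r 0 := (lt_getD_iff hs (show r < n by omega)).mpr hrc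
        have := (hkey r (by omega)).mp h1
        omega
    refine ⟨i, j, hjli, ?_⟩
    unfold hookLength
    rw [← hc, hcr]
    omega
end
def Closed (h : ℕ) (S : Finset ℕ) : Prop := ∀ b ∈ S, h ≤ b → b - h ∈ S

def Tset (s t : ℕ) : Set (Finset ℕ) :=
  {S | 0 ∉ S ∧ (∀ x ∈ S, x + 1 ∉ S) ∧ Closed s S ∧ Closed t S}

def Pset (s t : ℕ) : Set (List ℕ) :=
  {l | IsPartition l ∧ l.Nodup ∧ IsCore s l ∧ IsCore t l}

lemma isCore_iff_closed {l : List ℕ} (hs : l.Pairwise (· ≥ ·)) (h : ℕ) :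
    IsCore h l ↔ Closed h (beadSet l) := by
  unfold IsCore Closed
  rw [hasHook_iff_bead hs h]
  push_neg
  constructor
  · intro H b hb hhb; exact H b hb hhb
  · intro H b hb hhb; exact H b hb hhb

/-- gap lemma -/
lemma getD_gap (e : List ℕ) (g : ℕ)
    (hadj : ∀ i, i + 1 < e.length → e.getD (i+1) 0 + g ≤ e.getD i 0) :
    ∀ k i, i + k < e.length → e.getD (i+k) 0 + g * k ≤ e.getD i 0 := by
  intro k
  induction k with
  | zero => intro i _; simp
  | succ k ih =>
    intro i hik
    have h1 := hadj (i + k) (by omega)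
    have h2 := ih i (by omega)
    have h3 : g * (k + 1) = g * k + g := by ring
    have h4 : i + (k + 1) = (i + k) + 1 := by omega
    calc e.getD (i + (k+1)) 0 + g * (k+1)
        = e.getD ((i+k)+1) 0 + g + g * k := by rw [h4, h3]; ring
      _ ≤ e.getD (i+k) 0 + g * k := by omega
      _ ≤ e.getD i 0 := h2

section
variable {l : List ℕ}

lemma strict_of_partition (hp : IsPartition l) (hnd : l.Nodup) :
    l.Pairwise (· > ·) := by
  have := (hp.1.and hnd)
  exact this.imp (fun {a b} hab => lt_of_le_of_ne hab.1 (Ne.symm hab.2))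

/-- bead list -/
def blist (l : List ℕ) : List ℕ :=
  (List.range l.length).map (fun i => l.getD i 0 + (l.length - 1 - i))

lemma blist_length : (blist l).length = l.length := by simp [blist]

lemma blist_getD {k : ℕ} (hk : k < l.length) :
    (blist l).getD k 0 = l.getD k 0 + (l.length - 1 - k) := by
  rw [blist, List.getD_eq_getElem _ _ (by simpa using hk)]
  simp

lemma blist_toFinset : (blist l).toFinset = beadSet l := by
  ext x
  simp only [List.mem_toFinset, mem_beadSet, blist, List.mem_map, List.mem_range]
  constructor
  · rintro ⟨i, hi, rfl⟩; exact ⟨i, hi, rfl⟩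
  · rintro ⟨i, hi, rfl⟩; exact ⟨i, hi, rfl⟩

lemma blist_sorted (hs : l.Pairwise (· ≥ ·)) : (blist l).Pairwise (· > ·) := by
  rw [List.pairwise_iff_getElem]
  intro a c ha hc hac
  have hc2 : c < l.length := by rw [blist_length] at hc; exact hc
  have ha2 : a < l.length := by omega
  simp only [blist, List.getElem_map, List.getElem_range]
  have h1 : l.getD c 0 ≤ l.getD a 0 := by
    rw [List.getD_eq_getElem _ _ ha2, List.getD_eq_getElem _ _ hc2]
    exact List.pairwise_iff_getElem.mp hs a c ha2 hc2 hac
  omega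

lemma blist_strict_adj (hp : IsPartition l) (hnd : l.Nodup) :
    ∀ i, i + 1 < (blist l).length → (blist l).getD (i+1) 0 + 2 ≤ (blist l).getD i 0 := by
  intro i hi
  rw [blist_length] at hi
  rw [blist_getD (by omega), blist_getD (by omega)]
  have hstrict := strict_of_partition hp hnd
  have h1 : l.getD (i+1) 0 < l.getD i 0 := by
    rw [List.getD_eq_getElem _ _ (show i < l.length by omega),
        List.getD_eq_getElem _ _ (show i+1 < l.length by omega)]
    exact List.pairwise_iff_getElem.mp hstrict i (i+1) (by omega) (by omega) (by omega)
  omega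

lemma bead_mem_T (hl : l ∈ Pset s t) : beadSet l ∈ Tset s t := by
  obtain ⟨hp, hnd, hc1, hc2⟩ := hl
  have hsorted := hp.1
  refine ⟨?_, ?_, ?_, ?_⟩
  · -- 0 ∉
    rw [mem_beadSet]
    rintro ⟨i, hi, hieq⟩
    have : l.getD i 0 ∈ l := by
      rw [List.getD_eq_getElem _ _ hi]; exact List.getElem_mem _
    have := hp.2 _ this
    omega
  · -- no consecutive
    intro x hx hx1
    rw [mem_beadSet] at hx hx1
    obtain ⟨i, hi, rfl⟩ := hx
    obtain ⟨k, hk, hkeq⟩ := hx1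
    -- compare as blist values
    have hgap := getD_gap (blist l) 2 (blist_strict_adj hp hnd)
    rcases Nat.lt_trichotomy k i with h | h | h
    · have := hgap (i - k) k (by rw [blist_length]; omega)
      rw [show k + (i - k) = i by omega, blist_getD hi, blist_getD hk] at this
      omega
    · subst h; omega
    · have := hgap (k - i) i (by rw [blist_length]; omega)
      rw [show i + (k - i) = k by omega, blist_getD hi, blist_getD hk] at this
      omega
  · exact (isCore_iff_closed hsorted s).mp hc1
  · exact (isCore_iff_closed hsorted t).mp hc2

lemma bead_injOn : Set.InjOn beadSet (Pset s t) := by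
  intro l1 h1 l2 h2 heq
  have hb1 : (blist l1).toFinset = (blist l2).toFinset := by
    rw [blist_toFinset, blist_toFinset, heq]
  have hs1 := blist_sorted h1.1.1
  have hs2 := blist_sorted h2.1.1
  have hnd1 : (blist l1).Nodup := hs1.imp (fun {a b} h => ne_of_gt h)
  have hnd2 : (blist l2).Nodup := hs2.imp (fun {a b} h => ne_of_gt h)
  have hperm := List.perm_of_nodup_nodup_toFinset_eq hnd1 hnd2 hb1
  have hbe : blist l1 = blist l2 := hperm.eq_of_pairwise (fun _ _ _ _ h1 h2 => absurd h1 (lt_asymm h2)) hs1 hs2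
  have hlen : l1.length = l2.length := by
    have := congrArg List.length hbe
    rwa [blist_length, blist_length] at this
  apply List.ext_getElem hlen
  intro i hi1 hi2
  have h1 := blist_getD (l := l1) hi1
  have h2 := blist_getD (l := l2) hi2
  rw [hbe] at h1
  rw [h1] at h2
  rw [List.getD_eq_getElem _ _ hi1, List.getD_eq_getElem _ _ hi2] at h2
  omega

lemma list_mem_iff_getD {d : List ℕ} {x : ℕ} :
    x ∈ d ↔ ∃ i, i < d.length ∧ x = d.getD i 0 := by
  constructor
  · intro hx
    obtain ⟨i, hi, hieq⟩ := List.mem_iff_getElem.mp hx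
    exact ⟨i, hi, by rw [List.getD_eq_getElem _ _ hi, hieq]⟩
  · rintro ⟨i, hi, rfl⟩
    rw [List.getD_eq_getElem _ _ hi]
    exact List.getElem_mem _

lemma T_sub_image {s t : ℕ} : Tset s t ⊆ beadSet '' (Pset s t) := by
  rintro S ⟨h0, hnc, hcs, hct⟩
  set d : List ℕ := (S.sort (· ≤ ·)).reverse with hd
  set n := d.length with hn
  have hdmem : ∀ x, x ∈ d ↔ x ∈ S := by
    intro x; rw [hd, List.mem_reverse, Finset.mem_sort]
  have hdsorted : d.Pairwise (· > ·) := by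
    rw [hd, List.pairwise_reverse]
    exact S.sortedLT_sort.pairwise
  have hdgetmem : ∀ i, i < n → d.getD i 0 ∈ S := by
    intro i hi
    rw [← hdmem]
    exact list_mem_iff_getD.mpr ⟨i, hi, rfl⟩
  have hadj2 : ∀ i, i + 1 < d.length → d.getD (i+1) 0 + 2 ≤ d.getD i 0 := by
    intro i hi
    have hlt : d.getD (i+1) 0 < d.getD i 0 := by
      rw [List.getD_eq_getElem _ _ (show i < d.length by omega),
          List.getD_eq_getElem _ _ (show i + 1 < d.length from hi)]
      exact List.pairwise_iff_getElem.mp hdsorted i (i+1) (by omega) hi (by omega)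
    have h1 : d.getD (i+1) 0 + 1 ∉ S := hnc _ (hdgetmem (i+1) hi)
    have h2 : d.getD i 0 ∈ S := hdgetmem i (by omega)
    rcases Nat.lt_or_ge (d.getD (i+1) 0 + 1) (d.getD i 0) with h | h
    · omega
    · have : d.getD i 0 = d.getD (i+1) 0 + 1 := by omega
      rw [← this] at h1
      exact absurd h2 h1
  have hgap2 := getD_gap d 2 hadj2
  have hlast : ∀ i, i < n → 1 + (n - 1 - i) ≤ d.getD i 0 := by
    intro i hi
    have h1 := hgap2 (n - 1 - i) i (by omega)
    have h2 : d.getD (i + (n-1-i)) 0 = d.getD (n-1) 0 := by congr 1; omega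
    have h3 : 0 < d.getD (n-1) 0 := by
      have := hdgetmem (n-1) (by omega)
      rcases Nat.eq_zero_or_pos (d.getD (n-1) 0) with hz | hp
      · rw [hz] at this; exact absurd this h0
      · exact hp
    omega
  set l : List ℕ := (List.range n).map (fun i => d.getD i 0 - (n - 1 - i)) with hl
  have hllen : l.length = n := by simp [hl]
  have hlgetD : ∀ i, i < n → l.getD i 0 = d.getD i 0 - (n - 1 - i) := by
    intro i hi
    rw [hl, List.getD_eq_getElem _ _ (by simpa using hi)]
    simp
  have hlpair : l.Pairwise (· > ·) := by
    rw [List.pairwise_iff_getElem]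
    intro a c ha hc hac
    have hc2 : c < n := by rw [hllen] at hc; exact hc
    have ha2 : a < n := by omega
    have h1 := hgap2 (c - a) a (by omega)
    rw [show a + (c - a) = c by omega] at h1
    have h2 := hlast c hc2
    have h3 := hlgetD a ha2
    have h4 := hlgetD c hc2
    rw [← List.getD_eq_getElem _ _ ha, ← List.getD_eq_getElem _ _ hc, h3, h4]
    omega
  have hlsorted : l.Pairwise (· ≥ ·) := hlpair.imp (fun {a b} h => le_of_lt h)
  have hlnodup : l.Nodup := hlpair.imp (fun {a b} h => ne_of_gt h)
  have hlpos : ∀ x ∈ l, 0 < x := by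
    intro x hx
    obtain ⟨i, hi, rfl⟩ := list_mem_iff_getD.mp hx
    rw [hllen] at hi
    rw [hlgetD i hi]
    have := hlast i hi
    omega
  have hbead : beadSet l = S := by
    ext x
    rw [mem_beadSet, ← hdmem, list_mem_iff_getD]
    constructor
    · rintro ⟨i, hi, rfl⟩
      rw [hllen] at hi
      refine ⟨i, by omega, ?_⟩
      rw [hllen, hlgetD i hi]
      have := hlast i hi
      omega
    · rintro ⟨i, hi, rfl⟩
      refine ⟨i, by omega, ?_⟩
      rw [hllen, hlgetD i (by omega)]
      have := hlast i (by omega)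
      omega
  refine ⟨l, ⟨⟨hlsorted, hlpos⟩, hlnodup, ?_, ?_⟩, hbead⟩
  · rw [isCore_iff_closed hlsorted, hbead]; exact hcs
  · rw [isCore_iff_closed hlsorted, hbead]; exact hct

lemma image_bead_eq {s t : ℕ} : beadSet '' (Pset s t) = Tset s t := by
  apply Set.Subset.antisymm
  · rintro _ ⟨l, hl, rfl⟩; exact bead_mem_T hl
  · exact T_sub_image

lemma ncard_P_eq_T (s t : ℕ) : (Pset s t).ncard = (Tset s t).ncard := by
  rw [← image_bead_eq (s := s) (t := t), Set.ncard_image_of_injOn bead_injOn]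

end
/-- Good profile lists -/
def Good (m : ℕ) : List ℕ → Prop
  | [] => True
  | [a] => a < m
  | a :: b :: q => a ≤ m + b ∧ (a = 0 ∨ b = 0) ∧ Good m (b :: q)

/-- index-style characterization -/
lemma good_iff (m : ℕ) : ∀ (p : List ℕ), Good m p ↔
    ((∀ r, r + 1 < p.length → (p.getD r 0 = 0 ∨ p.getD (r+1) 0 = 0) ∧
        p.getD r 0 ≤ m + p.getD (r+1) 0) ∧
      (p ≠ [] → p.getD (p.length - 1) 0 < m))
  | [] => by simp [Good]
  | [a] => by
    simp [Good]
  | a :: b :: q => by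
    have ih := good_iff m (b :: q)
    constructor
    · rintro ⟨h1, h2, h3⟩
      rw [ih] at h3
      refine ⟨?_, ?_⟩
      · intro r hr
        cases r with
        | zero => exact ⟨h2, h1⟩
        | succ r =>
          have := h3.1 r (by simpa using hr)
          simpa using this
      · intro _
        have := h3.2 (by simp)
        simpa using this
    · rintro ⟨h1, h2⟩
      have h0 := h1 0 (by simp)
      refine ⟨h0.2, h0.1, ?_⟩
      rw [ih]
      refine ⟨?_, ?_⟩
      · intro r hr
        have := h1 (r+1) (by simpa using hr)
        simpa using this
      · intro _
        have := h2 (by simp)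
        simpa using this

/-- the finsets of good profiles of each length -/
def GF (m : ℕ) : ℕ → Finset (List ℕ)
  | 0 => {[]}
  | 1 => (Finset.range m).image (fun a => [a])
  | (n+2) => ((GF m (n+1)).image (fun q => 0 :: q)) ∪
      (((Finset.range m) ×ˢ (GF m n)).image (fun x => (x.1 + 1) :: 0 :: x.2))

lemma good_cons_zero (m : ℕ) (hm : 1 ≤ m) (q : List ℕ) : Good m (0 :: q) ↔ Good m q := by
  cases q with
  | nil => simp only [Good]; constructor <;> intro <;> [trivial; omega]
  | cons b q => simp [Good]

lemma mem_GF (m : ℕ) (hm : 1 ≤ m) : ∀ n (p : List ℕ),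
    p ∈ GF m n ↔ p.length = n ∧ Good m p
  | 0, p => by
    constructor
    · intro hp
      simp [GF] at hp
      subst hp; simp [Good]
    · rintro ⟨hl, _⟩
      rw [List.length_eq_zero_iff] at hl
      subst hl; simp [GF]
  | 1, p => by
    simp only [GF, Finset.mem_image, Finset.mem_range]
    constructor
    · rintro ⟨a, ha, rfl⟩
      exact ⟨rfl, ha⟩
    · rintro ⟨hl, hg⟩
      match p, hl with
      | [a], _ => exact ⟨a, hg, rfl⟩
  | (n+2), p => by
    simp only [GF, Finset.mem_union, Finset.mem_image, Finset.mem_product]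
    constructor
    · rintro (⟨q, hq, rfl⟩ | ⟨⟨a, q⟩, ⟨ha, hq⟩, rfl⟩)
      · obtain ⟨hlen, hgood⟩ := (mem_GF m hm (n+1) q).mp hq
        refine ⟨by simp [hlen], ?_⟩
        rw [good_cons_zero m hm]
        exact hgood
      · obtain ⟨hlen, hgood⟩ := (mem_GF m hm n q).mp hq
        simp only [Finset.mem_range] at ha
        refine ⟨by simp [hlen], ?_⟩
        refine ⟨by omega, by omega, ?_⟩
        rw [good_cons_zero m hm]
        exact hgood
    · rintro ⟨hlen, hgood⟩
      match p, hlen with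
      | a :: b :: q, hlen =>
        obtain ⟨h1, h2, h3⟩ := hgood
        by_cases ha0 : a = 0
        · subst ha0
          exact Or.inl ⟨b :: q, (mem_GF m hm (n+1) _).mpr ⟨by simpa using hlen, h3⟩, rfl⟩
        · have hb0 : b = 0 := by tauto
          subst hb0
          refine Or.inr ⟨⟨a - 1, q⟩, ⟨⟨Finset.mem_range.mpr (by omega),
            (mem_GF m hm n q).mpr ⟨by simpa using hlen, (good_cons_zero m hm q).mp h3⟩⟩, ?_⟩⟩
          have : a - 1 + 1 = a := by omega
          rw [this]

lemma card_GF (m : ℕ) (hm : 1 ≤ m) (n : ℕ) :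
    (GF m (n+2)).card = (GF m (n+1)).card + m * (GF m n).card := by
  have hA : ((GF m (n+1)).image (fun q => 0 :: q)).card = (GF m (n+1)).card :=
    Finset.card_image_of_injective _ (fun a b h => by simpa using h)
  have hB : (((Finset.range m) ×ˢ (GF m n)).image (fun x => (x.1 + 1) :: 0 :: x.2)).card
      = m * (GF m n).card := by
    rw [Finset.card_image_of_injective _ ?_, Finset.card_product, Finset.card_range]
    rintro ⟨a, q⟩ ⟨a', q'⟩ h
    simp only [List.cons.injEq] at h
    obtain ⟨h1, _, h2⟩ := h
    simp only [Prod.mk.injEq]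
    exact ⟨by omega, h2⟩
  have hdisj : Disjoint ((GF m (n+1)).image (fun q => 0 :: q))
      (((Finset.range m) ×ˢ (GF m n)).image (fun x => (x.1 + 1) :: 0 :: x.2)) := by
    rw [Finset.disjoint_left]
    rintro p hp hp'
    simp only [Finset.mem_image] at hp hp'
    obtain ⟨q, _, rfl⟩ := hp
    obtain ⟨x, _, hx⟩ := hp'
    simp only [List.cons.injEq] at hx
    omega
  rw [show GF m (n+2) = ((GF m (n+1)).image (fun q => 0 :: q)) ∪
      (((Finset.range m) ×ˢ (GF m n)).image (fun x => (x.1 + 1) :: 0 :: x.2)) from by rw [GF],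
    Finset.card_union_of_disjoint hdisj, hA, hB]

lemma card_GF0 (m : ℕ) : (GF m 0).card = 1 := by simp [GF]
lemma card_GF1 (m : ℕ) : (GF m 1).card = m := by
  rw [GF, Finset.card_image_of_injective _ (fun a b h => by simpa using h)]
  simp
def Phi (s : ℕ) (p : List ℕ) : Finset ℕ :=
  (Finset.range (s - 1)).biUnion
    (fun r => (Finset.range (p.getD r 0)).image (fun j => (r+1) + j*s))

lemma canon {s : ℕ} (j d : ℕ) (hs : 0 < s) (hd : d < s) :
    (d + j * s) % s = d ∧ (d + j * s) / s = j := by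
  constructor
  · rw [Nat.add_mul_mod_self_right, Nat.mod_eq_of_lt hd]
  · rw [Nat.add_mul_div_right _ _ hs, Nat.div_eq_of_lt hd, zero_add]

lemma mem_Phi' {s : ℕ} (p : List ℕ) (x : ℕ) :
    x ∈ Phi s p ↔ ∃ r, r < s - 1 ∧ ∃ j, j < p.getD r 0 ∧ x = (r+1) + j*s := by
  simp only [Phi, Finset.mem_biUnion, Finset.mem_range, Finset.mem_image]
  constructor
  · rintro ⟨r, hr, j, hj, rfl⟩; exact ⟨r, hr, j, hj, rfl⟩
  · rintro ⟨r, hr, j, hj, rfl⟩; exact ⟨r, hr, j, hj, rfl⟩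

lemma rep_unique {s r j r' j' : ℕ} (hs0 : 0 < s) (hr : r + 1 < s) (hr' : r' + 1 < s)
    (heq : (r+1) + j*s = (r'+1) + j'*s) : r = r' ∧ j = j' := by
  have h1 := canon (s := s) j (r+1) hs0 hr
  have h2 := canon (s := s) j' (r'+1) hs0 hr'
  rw [heq] at h1
  rw [h2.1] at h1
  have h3 := h1.2
  rw [h2.2] at h3
  omega

lemma phi_mem_T {m s : ℕ} {p : List ℕ} (hm : 1 ≤ m) (hs : 2 ≤ s)
    (hlen : p.length = s - 1) (hg : Good m p) : Phi s p ∈ Tset s (m * s - 1) := by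
  have hs0 : 0 < s := by omega
  have hgi := (good_iff m p).mp hg
  have hms1 : 1 ≤ m * s := Nat.mul_pos (by omega) hs0
  refine ⟨?_, ?_, ?_, ?_⟩
  · rw [mem_Phi']
    rintro ⟨r, hr, j, hj, habs⟩
    omega
  · -- no two consecutive
    intro x hx hx1
    rw [mem_Phi'] at hx hx1
    obtain ⟨r, hr, j, hj, rfl⟩ := hx
    obtain ⟨r', hr', j', hj', heq⟩ := hx1
    by_cases hrc : r + 1 < s - 1
    · have heq2 : (r+1+1) + j*s = (r'+1) + j'*s := by omega
      obtain ⟨hre, hje⟩ := rep_unique hs0 (by omega) (by omega) heq2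
      subst hre
      subst hje
      have hadj := (hgi.1 r (by omega)).1
      omega
    · -- r + 1 = s - 1, so x+1 is a multiple of s
      have hrs : r + 1 = s - 1 := by omega
      have h1 : (r+1) + j*s + 1 = (j+1) * s := by
        have : (j+1) * s = j*s + s := by ring
        omega
      have h2 := canon (s := s) j' (r'+1) hs0 (by omega)
      rw [← heq, h1] at h2
      have := h2.1
      rw [Nat.mul_mod_left] at this
      omega
  · -- closed s
    intro x hx hsx
    rw [mem_Phi'] at hx ⊢
    obtain ⟨r, hr, j, hj, rfl⟩ := hx
    rcases j with _ | j'
    · simp at hsx; omega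
    · refine ⟨r, hr, j', by omega, ?_⟩
      have : (j'+1) * s = j'*s + s := by ring
      omega
  · -- closed t
    intro x hx htx
    rw [mem_Phi'] at hx ⊢
    obtain ⟨r, hr, j, hj, rfl⟩ := hx
    by_cases hrc : r < s - 2
    · -- j ≥ m
      have hjm : m ≤ j := by
        by_contra hcon
        have h2 : (j+1) * s ≤ m * s := Nat.mul_le_mul_right s (by omega)
        have h3 : (j+1) * s = j*s + s := by ring
        omega
      obtain ⟨jm, rfl⟩ : ∃ jm, j = m + jm := ⟨j - m, by omega⟩
      have he1 : (m + jm) * s = m * s + jm * s := by ring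
      have hbd := (hgi.1 r (by omega)).2
      refine ⟨r + 1, by omega, jm, by omega, ?_⟩
      omega
    · -- r = s - 2 : impossible
      exfalso
      have hrs : r = s - 2 := by omega
      have hlast := hgi.2 (by intro hnil; rw [hnil] at hlen; simp at hlen; omega)
      rw [hlen] at hlast
      have hlast2 : p.getD r 0 < m := by
        rw [show s - 1 - 1 = r by omega] at hlast; exact hlast
      have hj2 : j + 2 ≤ m := by omega
      have h2 : (j+2) * s ≤ m * s := Nat.mul_le_mul_right s (by omega)
      have h3 : (j+2) * s = j*s + 2*s := by ring
      omega

lemma getD_map_range (f : ℕ → ℕ) {n k : ℕ} (hk : k < n) :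
    ((List.range n).map f).getD k 0 = f k := by
  rw [List.getD_eq_getElem _ _ (by simpa using hk)]
  simp

lemma T_sub_phi_image {m s : ℕ} (hm : 1 ≤ m) (hs : 2 ≤ s) :
    Tset s (m * s - 1) ⊆ (Phi s) '' ↑(GF m (s - 1)) := by
  rintro S ⟨h0, hnc, hcs, hct⟩
  have hs0 : 0 < s := by omega
  have hms1 : 1 ≤ m * s := Nat.mul_pos (by omega) hs0
  set aF : ℕ → ℕ := fun r => sInf {j | (r+1) + j * s ∉ S} with haF
  have hne : ∀ r, {j | (r+1) + j * s ∉ S}.Nonempty := by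
    intro r
    refine ⟨(S.sup id) + 1, ?_⟩
    intro hmem
    have h1 : (r+1) + ((S.sup id)+1) * s ≤ S.sup id := Finset.le_sup (f := id) hmem
    have h2 : (S.sup id) + 1 ≤ ((S.sup id)+1) * s := Nat.le_mul_of_pos_right _ hs0
    omega
  have hdown : ∀ r j d, (r+1) + (j+d) * s ∈ S → (r+1) + j * s ∈ S := by
    intro r j d
    induction d with
    | zero => exact id
    | succ d ih =>
      intro hmem
      have he : (j + (d+1)) * s = (j+d) * s + s := by ring
      have h1 := hcs _ hmem (by omega)
      have h2 : (r+1) + (j+(d+1)) * s - s = (r+1) + (j+d) * s := by omega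
      rw [h2] at h1
      exact ih h1
  have hK1 : ∀ r j, (r+1) + j * s ∈ S ↔ j < aF r := by
    intro r j
    constructor
    · intro hmem
      by_contra hcon
      have h1 : (r+1) + (aF r) * s ∈ S := by
        have heq : aF r + (j - aF r) = j := by omega
        exact hdown r (aF r) (j - aF r) (by rw [heq]; exact hmem)
      exact (Nat.sInf_mem (hne r)) h1
    · intro hlt
      by_contra hcon
      exact (Nat.notMem_of_lt_sInf hlt) hcon
  have hK2 : ∀ x ∈ S, x % s ≠ 0 := by
    intro x
    induction x using Nat.strong_induction_on with
    | _ x ih =>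
      intro hx hmod
      rcases Nat.eq_zero_or_pos x with rfl | hpos
      · exact h0 hx
      · obtain ⟨k, rfl⟩ : s ∣ x := Nat.dvd_of_mod_eq_zero hmod
        obtain ⟨k', rfl⟩ : ∃ k', k = k' + 1 := ⟨k - 1, by
          rcases Nat.eq_zero_or_pos k with rfl | h
          · simp at hpos
          · omega⟩
        have hsx : s ≤ s * (k' + 1) := by
          have : s * (k'+1) = s * k' + s := by ring
          omega
        have h1 : s * (k'+1) - s ∈ S := hcs _ hx hsx
        have h2 : s * (k'+1) - s = s * k' := by
          have : s * (k'+1) = s * k' + s := by ring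
          omega
        rw [h2] at h1
        rcases Nat.eq_zero_or_pos k' with rfl | hk'
        · simp at h1; exact h0 h1
        · exact ih (s * k') (by
            have h3 : s * (k'+1) = s * k' + s := by ring
            omega) h1 (Nat.mul_mod_right s k')
  set p : List ℕ := (List.range (s-1)).map aF with hp
  have hplen : p.length = s - 1 := by simp [hp]
  have hpgetD : ∀ r, r < s - 1 → p.getD r 0 = aF r := fun r hr => getD_map_range aF hr
  have hSeq : Phi s p = S := by
    ext x
    rw [mem_Phi']
    constructor
    · rintro ⟨r, hr, j, hj, rfl⟩
      rw [hpgetD r hr] at hj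
      exact (hK1 r j).mpr hj
    · intro hx
      have hmod := hK2 x hx
      have hcs' : x % s < s := Nat.mod_lt _ hs0
      have hdm := Nat.div_add_mod x s
      refine ⟨x % s - 1, by omega, x / s, ?_, ?_⟩
      · rw [hpgetD _ (by omega)]
        apply (hK1 (x % s - 1) (x / s)).mp
        rw [show x % s - 1 + 1 = x % s by omega]
        rw [show x % s + x / s * s = x by
          have h2 : x / s * s = s * (x / s) := Nat.mul_comm _ _
          omega]
        exact hx
      · have h2 : x / s * s = s * (x / s) := Nat.mul_comm _ _
        omega
  have hgood : Good m p := by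
    rw [good_iff]
    constructor
    · intro r hr
      rw [hplen] at hr
      rw [hpgetD r (by omega), hpgetD (r+1) (by omega)]
      constructor
      · by_contra hcon
        push_neg at hcon
        have h1 : (r+1) + 0 * s ∈ S := (hK1 r 0).mpr (by omega)
        have h2 : (r+2) + 0 * s ∈ S := (hK1 (r+1) 0).mpr (by omega)
        simp only [Nat.zero_mul, Nat.add_zero] at h1 h2
        exact hnc _ h1 h2
      · by_contra hcon
        push_neg at hcon
        have h1 : (r+1) + (m + aF (r+1)) * s ∈ S := (hK1 r _).mpr (by omega)
        have he1 : (m + aF (r+1)) * s = m * s + aF (r+1) * s := by ring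
        have h2 := hct _ h1 (by omega)
        have h3 : (r+1) + (m + aF (r+1)) * s - (m * s - 1) = (r+2) + aF (r+1) * s := by
          omega
        rw [h3] at h2
        have := (hK1 (r+1) (aF (r+1))).mp h2
        omega
    · intro _
      rw [hplen, hpgetD (s - 1 - 1) (by omega)]
      by_contra hcon
      push_neg at hcon
      obtain ⟨m', rfl⟩ : ∃ m', m = m' + 1 := ⟨m - 1, by omega⟩
      have h1 : (s - 1 - 1 + 1) + m' * s ∈ S := (hK1 (s-1-1) m').mpr (by omega)
      have he1 : (m'+1) * s = m' * s + s := by ring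
      have hx : (s - 1 - 1 + 1) + m' * s = (m'+1) * s - 1 := by omega
      rw [hx] at h1
      have h2 := hct _ h1 (le_refl _)
      simp only [Nat.sub_self] at h2
      exact h0 h2
  exact ⟨p, by rw [Finset.mem_coe, mem_GF m hm]; exact ⟨hplen, hgood⟩, hSeq⟩

lemma phi_injOn {m s : ℕ} (hm : 1 ≤ m) (hs : 2 ≤ s) :
    Set.InjOn (Phi s) ↑(GF m (s - 1)) := by
  intro p1 h1 p2 h2 heq
  rw [Finset.mem_coe, mem_GF m hm] at h1 h2
  have hs0 : 0 < s := by omega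
  apply List.ext_getElem (by rw [h1.1, h2.1])
  intro r hr1 hr2
  have hrs : r < s - 1 := by have := h1.1; omega
  have hkey : ∀ (p : List ℕ) (j : ℕ), ((r+1) + j * s ∈ Phi s p ↔ j < p.getD r 0) := by
    intro p j
    rw [mem_Phi']
    constructor
    · rintro ⟨r', hr', j', hj', heq'⟩
      obtain ⟨hre, hje⟩ := rep_unique hs0 (by omega) (by omega) heq'
      subst hre; subst hje; exact hj'
    · intro hj
      exact ⟨r, hrs, j, hj, rfl⟩
  have hval : ∀ j, (j < p1.getD r 0 ↔ j < p2.getD r 0) := by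
    intro j
    rw [← hkey p1 j, ← hkey p2 j, heq]
  have heqd : p1.getD r 0 = p2.getD r 0 := by
    by_contra hne
    rcases Nat.lt_or_ge (p1.getD r 0) (p2.getD r 0) with h | h
    · have := (hval (p1.getD r 0)).mpr h; omega
    · have := (hval (p2.getD r 0)).mp (by omega)
      rcases Nat.lt_or_ge (p2.getD r 0) (p1.getD r 0) with h' | h'
      · have := (hval (p2.getD r 0)).mp h'; omega
      · omega
  rwa [List.getD_eq_getElem _ _ hr1, List.getD_eq_getElem _ _ hr2] at heqd

lemma ncard_T_eq {m s : ℕ} (hm : 1 ≤ m) (hs : 2 ≤ s) :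
    (Tset s (m * s - 1)).ncard = (GF m (s-1)).card := by
  have himg : (Phi s) '' ↑(GF m (s - 1)) = Tset s (m * s - 1) := by
    apply Set.Subset.antisymm
    · rintro _ ⟨p, hp, rfl⟩
      rw [Finset.mem_coe, mem_GF m hm] at hp
      exact phi_mem_T hm hs hp.1 hp.2
    · exact T_sub_phi_image hm hs
  rw [← himg, Set.ncard_image_of_injOn (phi_injOn hm hs), Set.ncard_coe_finset]


lemma Tset_one (t' : ℕ) : Tset 1 t' = {∅} := by
  apply Set.eq_singleton_iff_unique_mem.mpr
  constructor
  · exact ⟨by simp, by simp, by intro b hb; simp at hb, by intro b hb; simp at hb⟩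
  · rintro S ⟨h0, hnc, hc1, hc2⟩
    have hempty : ∀ x, x ∉ S := by
      intro x
      induction x using Nat.strong_induction_on with
      | _ x ih =>
        intro hx
        rcases Nat.eq_zero_or_pos x with rfl | hpos
        · exact h0 hx
        · exact ih (x - 1) (by omega) (hc1 x hx (by omega))
    exact Finset.eq_empty_of_forall_notMem hempty

lemma E_eq_card_GF (m s : ℕ) (hm : 1 ≤ m) (hs : 1 ≤ s) :
    (Pset s (m * s - 1)).ncard = (GF m (s - 1)).card := by
  rcases Nat.lt_or_ge s 2 with h2 | h2
  · have hs1 : s = 1 := by omega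
    subst hs1
    rw [ncard_P_eq_T, Tset_one, Set.ncard_singleton]
    simp [GF]
  · rw [ncard_P_eq_T, ncard_T_eq hm h2]

theorem Eminus_recurrence (m : ℕ) (hm : 1 ≤ m) :
    let E : ℕ → ℕ := fun s =>
      {l : List ℕ | IsPartition l ∧ l.Nodup ∧ IsCore s l ∧ IsCore (m * s - 1) l}.ncard
    E 1 = 1 ∧ E 2 = m ∧ ∀ s, 3 ≤ s → E s = E (s - 1) + m * E (s - 2) := by
  intro E
  have hE : ∀ s, 1 ≤ s → E s = (GF m (s - 1)).card := by
    intro s hs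
    exact E_eq_card_GF m s hm hs
  refine ⟨?_, ?_, ?_⟩
  · rw [hE 1 (by omega)]; simp [GF]
  · rw [hE 2 (by omega)]
    exact card_GF1 m
  · intro s hs
    rw [hE s (by omega), hE (s-1) (by omega), hE (s-2) (by omega)]
    have h1 : s - 1 = (s - 3) + 2 := by omega
    have h2 : s - 1 - 1 = (s - 3) + 1 := by omega
    have h3 : s - 2 - 1 = s - 3 := by omega
    rw [h2, h3, h1]
    exact card_GF m hm (s - 3)
end

section
/- For m, s ≥ 1, let E⁺_m(s) denote the number of partitions with distinct parts that are simultaneously s-core and (ms+1)-core. Then E⁺_m(1) = 1, E⁺_m(2) = m+1, and for s ≥ 3, E⁺_m(s) = E⁺_m(s−1) + m·E⁺_m(s−2). -/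
namespace Ep

lemma getD_map_range (f : ℕ → ℕ) {n i : ℕ} (h : i < n) :
    (((List.range n).map f).getD i 0) = f i := by
  rw [List.getD_eq_getElem _ _ (by simpa using h)]
  simp

lemma filt (j : ℕ) : ∀ (l : List ℕ), l.Pairwise (· ≥ ·) → ∀ i, i < l.length →
    (j < l.getD i 0 ↔ i < (l.filter (fun x => j < x)).length) := by
  intro l
  induction l with
  | nil => simp
  | cons a tl ih =>
    intro hs i hi
    have hs' : tl.Pairwise (· ≥ ·) := hs.of_cons
    have ha : ∀ x ∈ tl, x ≤ a := fun x hx => List.rel_of_pairwise_cons hs hx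
    by_cases hja : j < a
    · rw [List.filter_cons_of_pos (by simpa using hja)]
      cases i with
      | zero => simpa using hja
      | succ i =>
        simp only [List.getD_cons_succ, List.length_cons]
        rw [ih hs' i (by simpa using hi)]
        omega
    · have hfil : tl.filter (fun x => j < x) = [] := by
        apply List.filter_eq_nil_iff.2
        intro x hx
        simpa using Nat.le_trans (ha x hx) (Nat.le_of_not_lt hja)
      rw [List.filter_cons_of_neg (by simpa using hja), hfil]
      cases i with
      | zero => simpa using hja
      | succ i =>
        simp only [List.getD_cons_succ, List.length_nil]
        have hi' : i < tl.length := by simpa using hi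
        have : tl.getD i 0 ≤ j := by
          rw [List.getD_eq_getElem _ _ hi']
          exact Nat.le_trans (ha _ (List.getElem_mem hi')) (Nat.le_of_not_lt hja)
        omega

/-- the `i`-th first-column hook length -/
def bead (l : List ℕ) (i : ℕ) : ℕ := l.getD i 0 + (l.length - 1 - i)

lemma mem_beadSet {l : List ℕ} {x : ℕ} :
    x ∈ beadSet l ↔ ∃ i, i < l.length ∧ bead l i = x := by
  simp [beadSet, bead]

lemma part_le {l : List ℕ} (hp : l.Pairwise (· ≥ ·)) {i j : ℕ} (hij : i ≤ j)
    (hj : j < l.length) : l.getD j 0 ≤ l.getD i 0 := by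
  rcases Nat.eq_or_lt_of_le hij with rfl | hlt
  · exact le_refl _
  · have hi : i < l.length := lt_trans hlt hj
    rw [List.getD_eq_getElem _ _ hj, List.getD_eq_getElem _ _ hi]
    exact hp.rel_get_of_lt (a := ⟨i, hi⟩) (b := ⟨j, hj⟩) hlt

lemma part_pos {l : List ℕ} (hp : IsPartition l) {i : ℕ} (hi : i < l.length) :
    1 ≤ l.getD i 0 := by
  rw [List.getD_eq_getElem _ _ hi]
  exact hp.2 _ (List.getElem_mem hi)

lemma bead_lt {l : List ℕ} (hp : l.Pairwise (· ≥ ·)) {i j : ℕ} (hij : i < j)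
    (hj : j < l.length) : bead l j < bead l i := by
  have := part_le hp (Nat.le_of_lt hij) hj
  unfold bead
  omega

lemma bead_add_le {l : List ℕ} (hp : l.Pairwise (· ≥ ·)) {i j : ℕ} (hij : i ≤ j)
    (hj : j < l.length) : bead l j + (j - i) ≤ bead l i := by
  have := part_le hp hij hj
  unfold bead
  omega

lemma upclosed_eq_Ico {k : ℕ} {S : Finset ℕ} (hsub : S ⊆ Finset.range k)
    (hcl : ∀ t ∈ S, t + 1 < k → t + 1 ∈ S) : S = Finset.Ico (k - S.card) k := by
  rcases S.eq_empty_or_nonempty with rfl | hne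
  · simp
  · set a := S.min' hne with ha
    have haS : a ∈ S := S.min'_mem hne
    have hak : a < k := by simpa using hsub haS
    have hIco : ∀ t, a ≤ t → t < k → t ∈ S := by
      intro t ht
      induction t, ht using Nat.le_induction with
      | base => intro _; exact haS
      | succ t ht ih => intro h; exact hcl t (ih (by omega)) h
    have hS : S = Finset.Ico a k := by
      ext t
      simp only [Finset.mem_Ico]
      constructor
      · intro htS
        exact ⟨S.min'_le t htS, by simpa using hsub htS⟩
      · intro ⟨h1, h2⟩; exact hIco t h1 h2
    rw [hS, Nat.card_Ico]
    congr 1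
    omega

lemma bead_injOn {l : List ℕ} (hp : l.Pairwise (· ≥ ·)) {S : Finset ℕ}
    (hS : S ⊆ Finset.range l.length) : Set.InjOn (bead l) ↑S := by
  intro t ht t' ht' he
  have htk : t < l.length := by simpa using hS ht
  have htk' : t' < l.length := by simpa using hS ht'
  rcases Nat.lt_trichotomy t t' with h | h | h
  · have := bead_lt hp h htk'; omega
  · exact h
  · have := bead_lt hp h htk; omega

theorem hasHook_iff {l : List ℕ} (hp : IsPartition l) {s : ℕ} (hs : 1 ≤ s) :
    HasHook l s ↔ ∃ b ∈ beadSet l, s ≤ b ∧ b - s ∉ beadSet l := by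
  constructor
  · rintro ⟨i, j, hj, he⟩
    have hik : i < l.length := by
      by_contra h
      rw [List.getD_eq_default _ _ (Nat.le_of_not_lt h)] at hj
      omega
    set k := l.length with hk
    set c := (l.filter (fun x => j < x)).length with hc
    have hck : c ≤ k := List.length_filter_le _ _
    have hic : i < c := (filt j l hp.1 i hik).1 hj
    unfold hookLength at he
    rw [← hc] at he
    have hbi : bead l i = l.getD i 0 + (k - 1 - i) := rfl
    refine ⟨bead l i, mem_beadSet.2 ⟨i, hik, rfl⟩, by omega, ?_⟩
    intro hmem
    obtain ⟨t, htk, hbt⟩ := mem_beadSet.1 hmem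
    have hbt' : bead l t = l.getD t 0 + (k - 1 - t) := rfl
    by_cases htc : t < c
    · have h1 : j < l.getD t 0 := (filt j l hp.1 t htk).2 (by rw [← hc]; exact htc)
      omega
    · have h1 : ¬ j < l.getD t 0 := fun h => htc (by rw [hc] at *; exact (filt j l hp.1 t htk).1 h)
      omega
  · rintro ⟨b, hb, hsb, hnot⟩
    obtain ⟨i, hik, rfl⟩ := mem_beadSet.1 hb
    set k := l.length with hk
    set x := bead l i - s with hx
    set S := (Finset.range k).filter (fun t => bead l t < x) with hSdef
    set d := S.card with hd
    have hsub : S ⊆ Finset.range k := Finset.filter_subset _ _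
    have hSIco : S = Finset.Ico (k - d) k := by
      refine upclosed_eq_Ico hsub ?_
      intro t ht ht1
      have htk : t < k := by simpa using hsub ht
      have htx : bead l t < x := by
        have := Finset.mem_filter.1 ht
        simpa using this.2
      have : bead l (t+1) < bead l t := bead_lt hp.1 (by omega : t < t + 1) (by omega : t + 1 < l.length)
      simp only [hSdef, Finset.mem_filter, Finset.mem_range]
      exact ⟨ht1, by omega⟩
    have hmemx : ∀ t, t < k → (bead l t < x ↔ k - d ≤ t) := by
      intro t htk
      constructor
      · intro h
        have : t ∈ S := by simp [hSdef, htk, h]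
        rw [hSIco] at this
        exact (Finset.mem_Ico.1 this).1
      · intro h
        have : t ∈ S := by rw [hSIco]; exact Finset.mem_Ico.2 ⟨h, htk⟩
        exact (Finset.mem_filter.1 this).2
    have hd_le_x : d ≤ x := by
      have h1 : (S.image (bead l)).card = S.card := Finset.card_image_of_injOn (bead_injOn hp.1 hsub)
      have h2 : S.image (bead l) ⊆ Finset.range x := by
        intro y hy
        obtain ⟨t, ht, rfl⟩ := Finset.mem_image.1 hy
        have := (Finset.mem_filter.1 ht).2
        simpa using this
      have := Finset.card_le_card h2
      simpa [h1] using this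
    have hxs : bead l i = x + s := by omega
    have hikd : i < k - d := by
      by_contra h
      have := (hmemx i hik).2 (Nat.le_of_not_lt h)
      omega
    have hcount : k - d ≤ i + s := by
      have h1 : ((Finset.Ico (i+1) (k-d)).image (bead l)).card ≤ (Finset.Ioo x (bead l i)).card := by
        apply Finset.card_le_card
        intro y hy
        obtain ⟨t, ht, rfl⟩ := Finset.mem_image.1 hy
        obtain ⟨ht1, ht2⟩ := Finset.mem_Ico.1 ht
        have htk : t < k := by omega
        have hxt : ¬ bead l t < x := fun h => by have := (hmemx t htk).1 h; omega
        have hne : bead l t ≠ x := by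
          intro h
          exact hnot (by rw [← h]; exact mem_beadSet.2 ⟨t, htk, rfl⟩)
        have := bead_lt hp.1 (by omega : i < t) htk
        exact Finset.mem_Ioo.2 ⟨by omega, this⟩
      have h2 : ((Finset.Ico (i+1) (k-d)).image (bead l)).card = (Finset.Ico (i+1) (k-d)).card := by
        apply Finset.card_image_of_injOn
        apply bead_injOn hp.1
        intro t ht
        simp only [Finset.mem_Ico] at ht
        simp only [Finset.mem_range]
        omega
      rw [h2, Nat.card_Ico] at h1
      rw [Nat.card_Ioo] at h1
      omega
    set j := x - d with hj
    have hjl : ∀ t, t < k → (j < l.getD t 0 ↔ t < k - d) := by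
      intro t htk
      have hbt : bead l t = l.getD t 0 + (k - 1 - t) := rfl
      constructor
      · intro h
        by_contra h'
        have hkd : k - d ≤ t := Nat.le_of_not_lt h'
        have hkdk : k - d < k := by omega
        have h1 : bead l t + (t - (k - d)) ≤ bead l (k - d) := bead_add_le hp.1 hkd htk
        have h2 : bead l (k - d) < x := (hmemx (k - d) hkdk).2 (le_refl _)
        omega
      · intro h
        have hkd1 : k - d - 1 < k := by omega
        have ht1 : t ≤ k - d - 1 := by omega
        have h1 : bead l (k - d - 1) + ((k - d - 1) - t) ≤ bead l t := bead_add_le hp.1 ht1 hkd1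
        have h2 : ¬ bead l (k - d - 1) < x := fun hlt => by
          have := (hmemx _ hkd1).1 hlt; omega
        have h3 : bead l (k - d - 1) ≠ x := by
          intro hEq
          exact hnot (by rw [← hEq]; exact mem_beadSet.2 ⟨_, hkd1, rfl⟩)
        omega
    have hcj : (l.filter (fun y => j < y)).length = k - d := by
      set c := (l.filter (fun y => j < y)).length with hc
      have hck : c ≤ k := List.length_filter_le _ _
      rcases Nat.lt_trichotomy c (k - d) with h | h | h
      · exfalso
        have hck2 : c < k := by omega
        have := (hjl c hck2).2 h
        have := (filt j l hp.1 c hck2).1 this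
        omega
      · exact h
      · exfalso
        have hkk : k - d < k := by omega
        have := (filt j l hp.1 (k - d) hkk).2 (by omega)
        have := (hjl (k - d) hkk).1 this
        omega
    refine ⟨i, j, (hjl i hik).2 hikd, ?_⟩
    unfold hookLength
    rw [hcj]
    have hbi : bead l i = l.getD i 0 + (k - 1 - i) := rfl
    have hji : j < l.getD i 0 := (hjl i hik).2 hikd
    omega
lemma pget {bs : List ℕ} (h : List.Pairwise (· > ·) bs) {i j : ℕ} (hij : i < j)
    (hj : j < bs.length) : bs.getD j 0 < bs.getD i 0 := by
  rw [List.getD_eq_getElem _ _ hj, List.getD_eq_getElem _ _ (by omega)]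
  have := List.pairwise_iff_get.1 h ⟨i, by omega⟩ ⟨j, hj⟩ hij
  simpa using this

lemma desc_chain {bs : List ℕ} (h : List.Pairwise (· > ·) bs) {i j : ℕ} (hij : i ≤ j)
    (hj : j < bs.length) : bs.getD j 0 + (j - i) ≤ bs.getD i 0 := by
  induction j, hij using Nat.le_induction with
  | base => simp
  | succ j hij ih =>
    have h1 := ih (by omega)
    have h2 : bs.getD (j+1) 0 < bs.getD j 0 := pget h (by omega) hj
    omega

lemma gap_chain {bs : List ℕ} (h : List.Pairwise (· > ·) bs)
    (hgap : ∀ i, i + 1 < bs.length → bs.getD (i+1) 0 + 2 ≤ bs.getD i 0)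
    {i j : ℕ} (hij : i ≤ j) (hj : j < bs.length) :
    bs.getD j 0 + 2 * (j - i) ≤ bs.getD i 0 := by
  induction j, hij using Nat.le_induction with
  | base => simp
  | succ j hij ih =>
    have h1 := ih (by omega)
    have h2 := hgap j hj
    omega

/-- inverse of `beadSet` -/
def listOf (B : Finset ℕ) : List ℕ :=
  (List.range B.card).map (fun i => (B.sort (· ≥ ·)).getD i 0 - (B.card - 1 - i))

section listOf

variable {B : Finset ℕ}

lemma sort_desc : List.Pairwise (· > ·) (B.sort (· ≥ ·)) := by
  have h1 : List.Pairwise (· ≥ ·) (B.sort (· ≥ ·)) := Finset.pairwise_sort _ _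
  have h2 : List.Pairwise (· ≠ ·) (B.sort (· ≥ ·)) := Finset.sort_nodup _ _
  exact (h1.and h2).imp (fun hab => lt_of_le_of_ne hab.1 hab.2.symm)

lemma sort_length : (B.sort (· ≥ ·)).length = B.card := Finset.length_sort _

lemma sort_mem {i : ℕ} (h : i < B.card) : (B.sort (· ≥ ·)).getD i 0 ∈ B := by
  rw [List.getD_eq_getElem _ _ (by rw [sort_length]; exact h)]
  rw [← Finset.mem_sort (· ≥ ·)]
  exact List.getElem_mem _

lemma length_listOf : (listOf B).length = B.card := by simp [listOf]

lemma getD_listOf {i : ℕ} (h : i < B.card) :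
    (listOf B).getD i 0 = (B.sort (· ≥ ·)).getD i 0 - (B.card - 1 - i) :=
  getD_map_range _ h

lemma sort_lb (hpos : ∀ b ∈ B, 1 ≤ b) {i : ℕ} (h : i < B.card) :
    B.card - i ≤ (B.sort (· ≥ ·)).getD i 0 := by
  have h1 : (B.sort (· ≥ ·)).getD (B.card - 1) 0 + ((B.card - 1) - i) ≤ (B.sort (· ≥ ·)).getD i 0 :=
    desc_chain sort_desc (by omega) (by rw [sort_length]; omega)
  have h2 : 1 ≤ (B.sort (· ≥ ·)).getD (B.card - 1) 0 := hpos _ (sort_mem (by omega))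
  omega

lemma listOf_partition (hpos : ∀ b ∈ B, 1 ≤ b) : IsPartition (listOf B) := by
  constructor
  · rw [List.pairwise_iff_get]
    intro i j hij
    have hi : (i:ℕ) < B.card := lt_of_lt_of_le i.2 (le_of_eq length_listOf)
    have hj : (j:ℕ) < B.card := lt_of_lt_of_le j.2 (le_of_eq length_listOf)
    have e1 : (listOf B).get i = (listOf B).getD i 0 := by
      rw [List.getD_eq_getElem _ _ i.2, List.get_eq_getElem]
    have e2 : (listOf B).get j = (listOf B).getD j 0 := by
      rw [List.getD_eq_getElem _ _ j.2, List.get_eq_getElem]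
    rw [ge_iff_le, e1, e2, getD_listOf hi, getD_listOf hj]
    have h1 : (B.sort (· ≥ ·)).getD j 0 + ((j : ℕ) - (i : ℕ)) ≤ (B.sort (· ≥ ·)).getD i 0 :=
      desc_chain sort_desc (by exact_mod_cast hij.le) (by rw [sort_length]; exact hj)
    have h2 := sort_lb hpos hj
    have hij' : (i : ℕ) < (j : ℕ) := hij
    omega
  · intro x hx
    simp only [listOf, List.mem_map, List.mem_range] at hx
    obtain ⟨i, hi, rfl⟩ := hx
    have h2 := sort_lb hpos hi
    omega

lemma bead_listOf (hpos : ∀ b ∈ B, 1 ≤ b) {i : ℕ} (h : i < B.card) :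
    bead (listOf B) i = (B.sort (· ≥ ·)).getD i 0 := by
  unfold bead
  rw [length_listOf, getD_listOf h]
  have := sort_lb hpos h
  omega

lemma beadSet_listOf (hpos : ∀ b ∈ B, 1 ≤ b) : beadSet (listOf B) = B := by
  ext x
  rw [mem_beadSet, length_listOf]
  constructor
  · rintro ⟨i, hi, rfl⟩
    rw [bead_listOf hpos hi]
    exact sort_mem hi
  · intro hx
    rw [← Finset.mem_sort (· ≥ ·)] at hx
    obtain ⟨i, hi, hix⟩ := List.mem_iff_getElem.1 hx
    rw [sort_length] at hi
    refine ⟨i, hi, ?_⟩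
    rw [bead_listOf hpos hi, List.getD_eq_getElem _ _ (by rw [sort_length]; exact hi), hix]

lemma listOf_nodup (hpos : ∀ b ∈ B, 1 ≤ b) (hsp : ∀ b ∈ B, b + 1 ∉ B) :
    (listOf B).Nodup := by
  have hgap : ∀ i, i + 1 < (B.sort (· ≥ ·)).length →
      (B.sort (· ≥ ·)).getD (i+1) 0 + 2 ≤ (B.sort (· ≥ ·)).getD i 0 := by
    intro i hi
    rw [sort_length] at hi
    have h1 : (B.sort (· ≥ ·)).getD (i+1) 0 < (B.sort (· ≥ ·)).getD i 0 :=
      pget sort_desc (by omega) (by rw [sort_length]; exact hi)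
    have h2 := hsp _ (sort_mem (by omega : i + 1 < B.card))
    have h3 := sort_mem (by omega : i < B.card)
    by_contra h
    have : (B.sort (· ≥ ·)).getD i 0 = (B.sort (· ≥ ·)).getD (i+1) 0 + 1 := by omega
    rw [this] at h3
    exact h2 h3
  rw [List.Nodup, List.pairwise_iff_get]
  intro i j hij
  have hi : (i:ℕ) < B.card := lt_of_lt_of_le i.2 (le_of_eq length_listOf)
  have hj : (j:ℕ) < B.card := lt_of_lt_of_le j.2 (le_of_eq length_listOf)
  have e1 : (listOf B).get i = (listOf B).getD i 0 := by
    rw [List.getD_eq_getElem _ _ i.2, List.get_eq_getElem]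
  have e2 : (listOf B).get j = (listOf B).getD j 0 := by
    rw [List.getD_eq_getElem _ _ j.2, List.get_eq_getElem]
  rw [e1, e2, getD_listOf hi, getD_listOf hj]
  have h1 : (B.sort (· ≥ ·)).getD j 0 + 2 * ((j : ℕ) - (i : ℕ)) ≤ (B.sort (· ≥ ·)).getD i 0 :=
    gap_chain sort_desc hgap (by exact_mod_cast hij.le) (by rw [sort_length]; exact hj)
  have h2 := sort_lb hpos hj
  have hij' : (i : ℕ) < (j : ℕ) := hij
  omega

end listOf

lemma listOf_beadSet {l : List ℕ} (hp : IsPartition l) : listOf (beadSet l) = l := by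
  set k := l.length with hk
  set blist := (List.range k).map (bead l) with hbl
  have hblen : blist.length = k := by simp [hbl]
  have hbget : ∀ i, i < k → blist.getD i 0 = bead l i := fun i hi => getD_map_range _ hi
  have h2 : List.Pairwise (· > ·) blist := by
    rw [List.pairwise_iff_get]
    intro i j hij
    have hi : (i:ℕ) < k := lt_of_lt_of_le i.2 (le_of_eq hblen)
    have hj : (j:ℕ) < k := lt_of_lt_of_le j.2 (le_of_eq hblen)
    have e1 : blist.get i = bead l i := by
      rw [List.get_eq_getElem, ← List.getD_eq_getElem _ 0, hbget _ hi]
    have e2 : blist.get j = bead l j := by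
      rw [List.get_eq_getElem, ← List.getD_eq_getElem _ 0, hbget _ hj]
    rw [e1, e2]
    exact bead_lt hp.1 (by exact_mod_cast hij) hj
  have h3 : blist.Nodup := h2.imp ne_of_gt
  have h1 : blist.toFinset = beadSet l := by
    ext x
    rw [List.mem_toFinset, mem_beadSet]
    constructor
    · intro hx
      obtain ⟨i, hi, rfl⟩ := List.mem_map.1 hx
      exact ⟨i, by simpa using List.mem_range.1 hi, rfl⟩
    · rintro ⟨i, hi, rfl⟩
      exact List.mem_map.2 ⟨i, List.mem_range.2 hi, rfl⟩
  have hcard : (beadSet l).card = k := by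
    rw [← h1, List.card_toFinset, h3.dedup, hblen]
  have h4 : (beadSet l).sort (· ≥ ·) = blist := by
    refine (fun hq hq1 hq2 => List.Perm.eq_of_pairwise (fun a b _ _ h h' => le_antisymm h' h) hq1 hq2 hq) ?_ ?_ ?_
    · apply List.perm_of_nodup_nodup_toFinset_eq (Finset.sort_nodup _ _) h3
      rw [Finset.sort_toFinset, h1]
    · exact Finset.pairwise_sort _ _
    · exact h2.imp le_of_lt
  apply List.ext_get
  · rw [length_listOf, hcard]
  · intro n h1' h2'
    have hn : n < k := by rw [length_listOf, hcard] at h1'; exact h1'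
    have e1 : (listOf (beadSet l)).get ⟨n, h1'⟩ = (listOf (beadSet l)).getD n 0 := by
      rw [List.getD_eq_getElem _ _ h1', List.get_eq_getElem]
    rw [e1, getD_listOf (by rw [hcard]; exact hn), h4, hcard, hbget n hn]
    have hbn : bead l n = l.getD n 0 + (k - 1 - n) := rfl
    have e2 : l.get ⟨n, h2'⟩ = l.getD n 0 := by
      rw [List.getD_eq_getElem _ _ h2', List.get_eq_getElem]
    rw [e2]
    omega

lemma core_iff {l : List ℕ} (hp : IsPartition l) {s : ℕ} (hs : 1 ≤ s) :
    IsCore s l ↔ ∀ b ∈ beadSet l, s ≤ b → b - s ∈ beadSet l := by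
  unfold IsCore
  rw [hasHook_iff hp hs]
  push_neg
  rfl

lemma beadSet_pos {l : List ℕ} (hp : IsPartition l) : ∀ b ∈ beadSet l, 1 ≤ b := by
  intro b hb
  obtain ⟨i, hi, rfl⟩ := mem_beadSet.1 hb
  have := part_pos hp hi
  unfold bead
  omega

lemma beadSet_sparse {l : List ℕ} (hp : IsPartition l) (hnd : l.Nodup) :
    ∀ b ∈ beadSet l, b + 1 ∉ beadSet l := by
  intro b hb hb1
  obtain ⟨t', ht', rfl⟩ := mem_beadSet.1 hb
  obtain ⟨t, ht, hbt⟩ := mem_beadSet.1 hb1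
  have htt : t < t' := by
    rcases Nat.lt_trichotomy t t' with h | h | h
    · exact h
    · subst h; omega
    · have := bead_lt hp.1 h ht; omega
  have hne : l.getD t 0 ≠ l.getD t' 0 := by
    have := List.pairwise_iff_get.1 hnd ⟨t, ht⟩ ⟨t', ht'⟩ (Fin.mk_lt_mk.2 htt)
    rw [List.get_eq_getElem, List.get_eq_getElem, ← List.getD_eq_getElem _ 0,
      ← List.getD_eq_getElem _ 0] at this
    exact this
  have hge := part_le hp.1 htt.le ht'
  have e1 : bead l t = l.getD t 0 + (l.length - 1 - t) := rfl
  have e2 : bead l t' = l.getD t' 0 + (l.length - 1 - t') := rfl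
  omega
lemma getD_mem {c : List ℕ} {r : ℕ} (h : r < c.length) : c.getD r 0 ∈ c := by
  rw [List.getD_eq_getElem _ _ h]; exact List.getElem_mem _

lemma chain'_getD {c : List ℕ} (h : c.Chain' (fun a b => a = 0 ∨ b = 0)) {r : ℕ}
    (hr : r + 1 < c.length) : c.getD r 0 = 0 ∨ c.getD (r+1) 0 = 0 := by
  have := List.isChain_iff_getElem.1 h r (by omega)
  rw [← List.getD_eq_getElem _ 0,
    ← List.getD_eq_getElem _ 0] at this
  exact this

lemma mul_step {i i' s : ℕ} (h : i < i') : i * s + s ≤ i' * s := by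
  have h2 : (i + 1) * s ≤ i' * s := mul_le_mul_left (by omega) s
  rw [add_mul, one_mul] at h2
  exact h2

lemma rep_unique {s r r' i i' : ℕ} (hr : r < s - 1) (hr' : r' < s - 1)
    (h : (r+1) + i * s = (r'+1) + i' * s) : r = r' ∧ i = i' := by
  rcases Nat.lt_trichotomy i i' with hii | hii | hii
  · have := mul_step (s := s) hii; omega
  · subst hii; omega
  · have := mul_step (s := s) hii; omega

lemma rep_succ {s r r' i i' : ℕ} (hr : r < s - 1) (hr' : r' < s - 1)
    (h : (r+1) + i * s + 1 = (r'+1) + i' * s) : r' = r + 1 ∧ i' = i := by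
  rcases Nat.lt_trichotomy i i' with hii | hii | hii
  · have := mul_step (s := s) hii; omega
  · subst hii; omega
  · have := mul_step (s := s) hii; omega

/-- the bead set associated to a tuple of chain lengths -/
def psiF (s : ℕ) (c : List ℕ) : Finset ℕ :=
  (Finset.range (s-1)).biUnion (fun r => (Finset.range (c.getD r 0)).image (fun i => (r+1) + i * s))

lemma mem_psiF {s : ℕ} {c : List ℕ} {x : ℕ} :
    x ∈ psiF s c ↔ ∃ r, r < s - 1 ∧ ∃ i, i < c.getD r 0 ∧ (r+1) + i * s = x := by
  simp only [psiF, Finset.mem_biUnion, Finset.mem_image, Finset.mem_range]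

/-- the finite family counting the tuples -/
def W (m : ℕ) : ℕ → Finset (List ℕ)
  | 0 => {[]}
  | 1 => (Finset.range (m+1)).image (fun j => [j])
  | (n+2) => ((W m (n+1)).image (fun c => 0 :: c)) ∪
      (((Finset.Icc 1 m) ×ˢ (W m n)).image (fun p => p.1 :: 0 :: p.2))

lemma W_card0 (m : ℕ) : (W m 0).card = 1 := by rfl

lemma W_card1 (m : ℕ) : (W m 1).card = m + 1 := by
  rw [W, Finset.card_image_of_injective _ (fun a b h => by simpa using h)]
  simp

lemma W_card2 (m n : ℕ) : (W m (n+2)).card = (W m (n+1)).card + m * (W m n).card := by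
  rw [W, Finset.card_union_of_disjoint]
  · congr 1
    · exact Finset.card_image_of_injective _ (fun a b h => by simpa using h)
    · rw [Finset.card_image_of_injective _ (fun a b h => by
        simp only [List.cons.injEq] at h
        exact Prod.ext h.1 h.2.2)]
      rw [Finset.card_product, Nat.card_Icc]
      simp [Nat.mul_comm]
  · rw [Finset.disjoint_left]
    rintro a ha hb
    obtain ⟨c, _, rfl⟩ := Finset.mem_image.1 ha
    obtain ⟨p, hp, hpe⟩ := Finset.mem_image.1 hb
    have hp1 : 1 ≤ p.1 := (Finset.mem_Icc.1 (Finset.mem_product.1 hp).1).1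
    simp only [List.cons.injEq] at hpe
    omega

lemma W_mem (m : ℕ) : ∀ n (c : List ℕ), c ∈ W m n ↔
    (c.length = n ∧ (∀ x ∈ c, x ≤ m) ∧ c.Chain' (fun a b => a = 0 ∨ b = 0)) := by
  intro n
  induction n using Nat.strong_induction_on with
  | _ n ih =>
    match n with
    | 0 =>
      intro c
      simp only [W, Finset.mem_singleton]
      constructor
      · rintro rfl; simp; exact List.isChain_nil
      · rintro ⟨hl, _, _⟩; exact List.eq_nil_of_length_eq_zero hl
    | 1 =>
      intro c
      simp only [W, Finset.mem_image, Finset.mem_range]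
      constructor
      · rintro ⟨j, hj, rfl⟩
        refine ⟨rfl, ?_, List.isChain_singleton _⟩
        intro x hx; simp only [List.mem_singleton] at hx; omega
      · rintro ⟨hl, hle, _⟩
        match c, hl with
        | [a], _ => exact ⟨a, by have := hle a (by simp); omega, rfl⟩
    | (n+2) =>
      intro c
      rw [W]
      simp only [Finset.mem_union, Finset.mem_image]
      constructor
      · rintro (⟨c', hc', rfl⟩ | ⟨⟨a1, c2⟩, hp, rfl⟩)
        · obtain ⟨hl, hle, hch⟩ := (ih (n+1) (by omega) c').1 hc'
          refine ⟨by simp [hl], ?_, ?_⟩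
          · intro x hx
            rcases List.mem_cons.1 hx with rfl | hx
            · omega
            · exact hle x hx
          · match c', hl with
            | [], h => simp at h
            | (b :: c''), _ => exact List.IsChain.cons_cons (Or.inl rfl) hch
        · obtain ⟨hp1, hp2⟩ := Finset.mem_product.1 hp
          obtain ⟨hl, hle, hch⟩ := (ih n (by omega) c2).1 hp2
          have hp1' := Finset.mem_Icc.1 hp1
          refine ⟨by simp [hl], ?_, ?_⟩
          · intro x hx
            rcases List.mem_cons.1 hx with rfl | hx
            · simp only [Finset.mem_Icc] at hp1; omega
            · rcases List.mem_cons.1 hx with rfl | hx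
              · omega
              · exact hle x hx
          · refine List.IsChain.cons_cons (Or.inr rfl) ?_
            rcases c2 with _ | ⟨b, c''⟩
            · simp
            · exact List.IsChain.cons_cons (Or.inl rfl) hch
      · rintro ⟨hl, hle, hch⟩
        match c, hl with
        | (a :: b :: c'), hl =>
          have hl' : c'.length = n := by simpa using hl
          rcases (List.isChain_cons_cons.1 hch).1 with ha | hb
          · subst ha
            left
            refine ⟨b :: c', ?_, rfl⟩
            refine ((ih (n+1) (by omega) _).2 ⟨by simp [hl'], ?_, (List.isChain_cons_cons.1 hch).2⟩)
            intro x hx; exact hle x (List.mem_cons_of_mem _ hx)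
          · subst hb
            by_cases ha : a = 0
            · subst ha
              left
              refine ⟨0 :: c', ?_, rfl⟩
              refine ((ih (n+1) (by omega) _).2 ⟨by simp [hl'], ?_, ?_⟩)
              · intro x hx; exact hle x (List.mem_cons_of_mem _ hx)
              · exact (List.isChain_cons_cons.1 hch).2
            · right
              refine ⟨(a, c'), ?_, rfl⟩
              rw [Finset.mem_product]
              constructor
              · rw [Finset.mem_Icc]
                exact ⟨by omega, hle a (by simp)⟩
              · refine (ih n (by omega) _).2 ⟨hl', ?_, ?_⟩
                · intro x hx
                  exact hle x (List.mem_cons_of_mem _ (List.mem_cons_of_mem _ hx))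
                · exact ((List.isChain_cons_cons.1 hch).2).tail

lemma closed_struct {s : ℕ} {B : Finset ℕ} (hpos : ∀ b ∈ B, 1 ≤ b)
    (hcl : ∀ b ∈ B, s ≤ b → b - s ∈ B) (hs : 1 ≤ s) : ∀ b ∈ B, b % s ≠ 0 := by
  intro b
  induction b using Nat.strong_induction_on with
  | _ b ih =>
    intro hb
    by_cases hbs : s ≤ b
    · have h1 : b - s ∈ B := hcl b hb hbs
      have h2 : (b - s) % s = b % s := by
        conv_rhs => rw [show b = (b - s) + s by omega]
        rw [Nat.add_mod_right]
      rw [← h2]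
      exact ih (b - s) (by omega) h1
    · have := hpos b hb
      rw [Nat.mod_eq_of_lt (by omega)]
      omega

lemma lowerset_eq_range {S : Finset ℕ} (h : ∀ i, i + 1 ∈ S → i ∈ S) :
    S = Finset.range S.card := by
  rcases S.eq_empty_or_nonempty with rfl | hne
  · simp
  · set M := S.max' hne with hM
    have hfull : ∀ d j, j + d = M → j ∈ S := by
      intro d
      induction d with
      | zero => intro j hj; rw [show j = M by omega]; exact S.max'_mem hne
      | succ d ihd =>
        intro j hj
        exact h j (ihd (j+1) (by omega))
    have hS : S = Finset.range (M + 1) := by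
      ext x
      simp only [Finset.mem_range]
      constructor
      · intro hx; have := S.le_max' x hx; omega
      · intro hx; exact hfull (M - x) x (by omega)
    rw [hS, Finset.card_range]

def ValidB (s t : ℕ) (B : Finset ℕ) : Prop :=
  (∀ b ∈ B, 1 ≤ b) ∧ (∀ b ∈ B, b + 1 ∉ B) ∧
    (∀ b ∈ B, s ≤ b → b - s ∈ B) ∧ (∀ b ∈ B, t ≤ b → b - t ∈ B)

lemma psi_valid {m s : ℕ} (hm : 1 ≤ m) (hs : 1 ≤ s) {c : List ℕ} (hc : c ∈ W m (s-1)) :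
    ValidB s (m*s+1) (psiF s c) := by
  obtain ⟨hlen, hle, hch⟩ := (W_mem m (s-1) c).1 hc
  have hentry : ∀ r, r < s - 1 → c.getD r 0 ≤ m := by
    intro r hr
    exact hle _ (getD_mem (by omega : r < c.length))
  refine ⟨?_, ?_, ?_, ?_⟩
  · intro b hb
    obtain ⟨r, hr, i, hi, rfl⟩ := mem_psiF.1 hb
    omega
  · intro b hb hb1
    obtain ⟨r, hr, i, hi, rfl⟩ := mem_psiF.1 hb
    obtain ⟨r', hr', i', hi', he⟩ := mem_psiF.1 hb1
    obtain ⟨hre, hie⟩ := rep_succ (i := i) (i' := i') hr hr' (by omega)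
    subst hre; subst hie
    rcases chain'_getD hch (by omega : r + 1 < c.length) with h0 | h0 <;> omega
  · intro b hb hsb
    obtain ⟨r, hr, i, hi, rfl⟩ := mem_psiF.1 hb
    have hipos : 1 ≤ i := by
      by_contra h
      have : i = 0 := by omega
      subst this
      simp at hsb
      omega
    have he : i * s = (i-1) * s + s := by
      conv_lhs => rw [show i = (i-1) + 1 by omega]
      rw [add_mul, one_mul]
    refine mem_psiF.2 ⟨r, hr, i - 1, by omega, by omega⟩
  · intro b hb htb
    exfalso
    obtain ⟨r, hr, i, hi, rfl⟩ := mem_psiF.1 hb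
    have h1 : c.getD r 0 ≤ m := hentry r hr
    have h2 : i * s ≤ (m-1) * s := mul_le_mul_left (by omega) s
    have h3 : (m-1) * s + s = m * s := by
      conv_rhs => rw [show m = (m-1) + 1 by omega]
      rw [add_mul, one_mul]
    omega

lemma psi_inj {m s : ℕ} (hs : 1 ≤ s) {c c' : List ℕ} (hc : c ∈ W m (s-1))
    (hc' : c' ∈ W m (s-1)) (he : psiF s c = psiF s c') : c = c' := by
  have hlen := ((W_mem m (s-1) c).1 hc).1
  have hlen' := ((W_mem m (s-1) c').1 hc').1
  have key : ∀ (a b : List ℕ), psiF s a = psiF s b → ∀ r, r < s - 1 →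
      ¬ (a.getD r 0 < b.getD r 0) := by
    intro a b hab r hr hlt
    have hy : (r+1) + (a.getD r 0) * s ∈ psiF s b :=
      mem_psiF.2 ⟨r, hr, a.getD r 0, hlt, rfl⟩
    rw [← hab] at hy
    obtain ⟨r', hr', i', hi', he'⟩ := mem_psiF.1 hy
    obtain ⟨hre, hie⟩ := rep_unique hr' hr he'
    subst hre; subst hie
    omega
  apply List.ext_get (by omega)
  intro r h1 h2
  have hr : r < s - 1 := by omega
  have e1 : c.get ⟨r, h1⟩ = c.getD r 0 := by
    rw [List.getD_eq_getElem _ _ h1, List.get_eq_getElem]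
  have e2 : c'.get ⟨r, h2⟩ = c'.getD r 0 := by
    rw [List.getD_eq_getElem _ _ h2, List.get_eq_getElem]
  rw [e1, e2]
  rcases Nat.lt_trichotomy (c.getD r 0) (c'.getD r 0) with h | h | h
  · exact absurd h (key c c' he r hr)
  · exact h
  · exact absurd h (key c' c he.symm r hr)

lemma psi_surj {m s : ℕ} (hm : 1 ≤ m) (hs : 1 ≤ s) {B : Finset ℕ}
    (hv : ValidB s (m*s+1) B) : ∃ c ∈ W m (s-1), psiF s c = B := by
  obtain ⟨hpos, hsp, hcls, hclt⟩ := hv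
  have hmod := closed_struct hpos hcls hs
  set I : ℕ → Finset ℕ := fun r => (B.filter (fun x => x % s = r + 1)).image (fun x => x / s)
    with hI
  have hIdc : ∀ r, r < s - 1 → ∀ i, i + 1 ∈ I r → i ∈ I r := by
    intro r hr i hi
    simp only [hI, Finset.mem_image, Finset.mem_filter] at hi ⊢
    obtain ⟨x, ⟨hxB, hxr⟩, hxd⟩ := hi
    have hxe : x = s * (x / s) + x % s := (Nat.div_add_mod x s).symm
    have hx2 : x = s * (i+1) + (r+1) := by rw [hxe, hxd, hxr]
    have hxs : s ≤ x := by
      have : s * 1 ≤ s * (i+1) := Nat.mul_le_mul_left s (by omega)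
      omega
    refine ⟨x - s, ⟨hcls x hxB hxs, ?_⟩, ?_⟩
    · have : x - s = s * i + (r+1) := by
        have : s * (i+1) = s * i + s := by rw [Nat.mul_succ]
        omega
      rw [this, Nat.mul_add_mod]
      exact Nat.mod_eq_of_lt (by omega)
    · have h4 : x - s = s * i + (r+1) := by
        have : s * (i+1) = s * i + s := by rw [Nat.mul_succ]
        omega
      rw [h4, Nat.mul_add_div (by omega)]
      rw [Nat.div_eq_of_lt (by omega)]
      omega
  have hIrange : ∀ r, r < s - 1 → I r = Finset.range (I r).card := by
    intro r hr
    exact lowerset_eq_range (hIdc r hr)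
  set c : List ℕ := (List.range (s-1)).map (fun r => (I r).card) with hc
  have hcget : ∀ r, r < s - 1 → c.getD r 0 = (I r).card := by
    intro r hr
    exact getD_map_range _ hr
  have hclen : c.length = s - 1 := by simp [hc]
  have hmemB : ∀ x, x ∈ B ↔ x ∈ psiF s c := by
    intro x
    constructor
    · intro hx
      have h0 := hmod x hx
      have h1 : x % s < s := Nat.mod_lt x (by omega)
      set r := x % s - 1 with hr
      have hrs : r < s - 1 := by omega
      have hdiv : x / s ∈ I r := by
        simp only [hI, Finset.mem_image, Finset.mem_filter]
        exact ⟨x, ⟨hx, by omega⟩, rfl⟩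
      have hcard : x / s < (I r).card := by
        have := hIrange r hrs
        rw [this] at hdiv
        simpa using hdiv
      refine mem_psiF.2 ⟨r, hrs, x / s, by rw [hcget r hrs]; exact hcard, ?_⟩
      have hxe : s * (x / s) + x % s = x := Nat.div_add_mod x s
      have : (x / s) * s = s * (x / s) := Nat.mul_comm _ _
      omega
    · intro hx
      obtain ⟨r, hr, i, hi, rfl⟩ := mem_psiF.1 hx
      rw [hcget r hr] at hi
      have : i ∈ I r := by rw [hIrange r hr]; simpa using hi
      simp only [hI, Finset.mem_image, Finset.mem_filter] at this
      obtain ⟨y, ⟨hyB, hyr⟩, hyd⟩ := this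
      have hye : y = s * (y / s) + y % s := (Nat.div_add_mod y s).symm
      have : y = (r+1) + i * s := by
        rw [hye, hyd, hyr]
        have : i * s = s * i := Nat.mul_comm _ _
        omega
      rw [← this] at *
      rwa [this] at hyB
  have hcW : c ∈ W m (s-1) := by
    refine (W_mem m (s-1) c).2 ⟨hclen, ?_, ?_⟩
    · intro x hx
      simp only [hc, List.mem_map, List.mem_range] at hx
      obtain ⟨r, hr, rfl⟩ := hx
      by_contra h
      push_neg at h
      have h0 : 0 ∈ I r := by
        rw [hIrange r hr, Finset.mem_range]
        omega
      have hm0 : m ∈ I r := by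
        rw [hIrange r hr, Finset.mem_range]
        omega
      simp only [hI, Finset.mem_image, Finset.mem_filter] at h0 hm0
      obtain ⟨y0, ⟨hy0B, hy0r⟩, hy0d⟩ := h0
      obtain ⟨ym, ⟨hymB, hymr⟩, hymd⟩ := hm0
      have hy0 : y0 = r + 1 := by
        have := (Nat.div_add_mod y0 s).symm
        rw [hy0d, hy0r] at this
        simpa using this
      have hym : ym = s * m + (r + 1) := by
        have := (Nat.div_add_mod ym s).symm
        rw [hymd, hymr] at this
        exact this
      have hymt : m * s + 1 ≤ ym := by
        have : s * m = m * s := Nat.mul_comm _ _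
        omega
      have hrB : r ∈ B := by
        have := hclt ym hymB hymt
        have he : ym - (m * s + 1) = r := by
          have : s * m = m * s := Nat.mul_comm _ _
          omega
        rwa [he] at this
      have h1 : r + 1 ∉ B := hsp r hrB
      rw [← hy0] at h1
      exact h1 hy0B
    · refine List.isChain_iff_getElem.2 ?_
      intro p hp
      rw [hclen] at hp
      have hp1 : p < s - 1 := by omega
      have hp2 : p + 1 < s - 1 := by omega
      have hh1 : p < c.length := by omega
      have hh2 : p + 1 < c.length := by omega
      have e1 : (c)[p]'hh1 = c.getD p 0 := by
        rw [List.getD_eq_getElem c 0 hh1]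
      have e2 : (c)[p+1]'hh2 = c.getD (p+1) 0 := by
        rw [List.getD_eq_getElem c 0 hh2]
      rw [e1, e2, hcget p hp1, hcget (p+1) hp2]
      by_contra h
      push_neg at h
      obtain ⟨h1, h2⟩ := h
      have h01 : 0 ∈ I p := by rw [hIrange p hp1, Finset.mem_range]; omega
      have h02 : 0 ∈ I (p+1) := by rw [hIrange (p+1) hp2, Finset.mem_range]; omega
      simp only [hI, Finset.mem_image, Finset.mem_filter] at h01 h02
      obtain ⟨y0, ⟨hy0B, hy0r⟩, hy0d⟩ := h01
      obtain ⟨y1, ⟨hy1B, hy1r⟩, hy1d⟩ := h02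
      have hy0 : y0 = p + 1 := by
        have := (Nat.div_add_mod y0 s).symm
        rw [hy0d, hy0r] at this
        simpa using this
      have hy1 : y1 = p + 2 := by
        have := (Nat.div_add_mod y1 s).symm
        rw [hy1d, hy1r] at this
        simpa using this
      have := hsp y0 hy0B
      rw [hy0] at this
      rw [hy1] at hy1B
      exact this hy1B
  refine ⟨c, hcW, ?_⟩
  ext x
  rw [← hmemB x]

theorem main_count (m : ℕ) (hm : 1 ≤ m) (s : ℕ) (hs : 1 ≤ s) :
    {l : List ℕ | IsPartition l ∧ l.Nodup ∧ IsCore s l ∧ IsCore (m * s + 1) l}.ncard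
      = (W m (s-1)).card := by
  have hts : 1 ≤ m * s + 1 := by omega
  have himg : {l : List ℕ | IsPartition l ∧ l.Nodup ∧ IsCore s l ∧ IsCore (m * s + 1) l}
      = (fun c => listOf (psiF s c)) '' ↑(W m (s-1)) := by
    ext l
    simp only [Set.mem_setOf_eq, Set.mem_image, Finset.mem_coe]
    constructor
    · rintro ⟨hp, hnd, hc1, hc2⟩
      have hv : ValidB s (m * s + 1) (beadSet l) := ⟨beadSet_pos hp, beadSet_sparse hp hnd,
        (core_iff hp hs).1 hc1, (core_iff hp hts).1 hc2⟩
      obtain ⟨c, hcW, hce⟩ := psi_surj hm hs hv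
      exact ⟨c, hcW, by rw [hce, listOf_beadSet hp]⟩
    · rintro ⟨c, hcW, rfl⟩
      obtain ⟨hpos, hsp, hcls, hclt⟩ := psi_valid hm hs hcW
      have hp := listOf_partition hpos
      have hbs : beadSet (listOf (psiF s c)) = psiF s c := beadSet_listOf hpos
      refine ⟨hp, listOf_nodup hpos hsp, ?_, ?_⟩
      · rw [core_iff hp hs, hbs]; exact hcls
      · rw [core_iff hp hts, hbs]; exact hclt
  rw [himg, Set.ncard_image_of_injOn, Set.ncard_coe_finset]
  intro c hc c' hc' he
  have hcW : c ∈ W m (s-1) := hc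
  have hcW' : c' ∈ W m (s-1) := hc'
  have h1 : psiF s c = psiF s c' := by
    have e1 := beadSet_listOf (psi_valid hm hs hcW).1
    have e2 := beadSet_listOf (psi_valid hm hs hcW').1
    rw [← e1, ← e2]
    exact congrArg beadSet he
  exact psi_inj hs hcW hcW' h1

end Ep

theorem Eplus_recurrence (m : ℕ) (hm : 1 ≤ m) :
    let E : ℕ → ℕ := fun s =>
      {l : List ℕ | IsPartition l ∧ l.Nodup ∧ IsCore s l ∧ IsCore (m * s + 1) l}.ncard
    E 1 = 1 ∧ E 2 = m + 1 ∧ ∀ s, 3 ≤ s → E s = E (s - 1) + m * E (s - 2) := by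
  intro E
  have hE : ∀ s, 1 ≤ s → E s = (Ep.W m (s-1)).card := fun s hs => Ep.main_count m hm s hs
  refine ⟨?_, ?_, ?_⟩
  · rw [hE 1 (by omega), show (1:ℕ) - 1 = 0 by omega, Ep.W_card0]
  · rw [hE 2 (by omega), show (2:ℕ) - 1 = 1 by omega, Ep.W_card1]
  · intro s hs
    rw [hE s (by omega), hE (s-1) (by omega), hE (s-2) (by omega)]
    rw [show (s-1) - 1 = (s-3) + 1 by omega, show (s-2) - 1 = s - 3 by omega,
      show s - 1 = (s - 3) + 2 by omega, Ep.W_card2]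
end

section
/- For m, s ≥ 1, the counts of simultaneous core partitions with distinct parts satisfy E⁻_m(s) = E⁺_m(s−1) + (m−1)·E⁺_m(s−2) for s ≥ 3, where E⁻_m(s) counts distinct-part partitions that are both s-core and (ms−1)-core, and E⁺_m(s) counts distinct-part partitions that are both s-core and (ms+1)-core. -/
namespace Core

def col (l : List ℕ) (j : ℕ) : ℕ := (l.filter (fun x => j < x)).length

def beta (l : List ℕ) (i : ℕ) : ℕ := l.getD i 0 + (l.length - 1 - i)

def gapf (l : List ℕ) (j : ℕ) : ℕ := j + (l.length - col l j)

lemma col_le (l : List ℕ) (j : ℕ) : col l j ≤ l.length :=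
  List.length_filter_le _ _

lemma col_cons_pos (a : ℕ) (t : List ℕ) (j : ℕ) (h : j < a) :
    col (a :: t) j = col t j + 1 := by
  simp [col, List.filter_cons, h]

lemma col_cons_neg (a : ℕ) (t : List ℕ) (j : ℕ) (h : ¬ j < a) :
    col (a :: t) j = col t j := by
  simp [col, List.filter_cons, h]

lemma col_iff (l : List ℕ) (hl : l.Pairwise (· ≥ ·)) (i j : ℕ) (hi : i < l.length) :
    j < l.getD i 0 ↔ i < col l j := by
  induction l generalizing i with
  | nil => simp at hi
  | cons a t ih =>
    have hs := hl
    rw [List.pairwise_cons] at hs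
    cases i with
    | zero =>
      simp only [List.getD_cons_zero]
      constructor
      · intro h
        rw [col_cons_pos a t j h]; omega
      · intro h
        by_contra hja
        push_neg at hja
        rw [col_cons_neg a t j (by omega)] at h
        have hne : (t.filter (fun x => j < x)) ≠ [] := by
          intro hc; simp only [col, hc] at h; simp at h
        obtain ⟨x, hx⟩ := List.exists_mem_of_ne_nil _ hne
        have hxt := (List.mem_filter.mp hx).1
        have hjx : j < x := by simpa using (List.mem_filter.mp hx).2
        exact absurd (lt_of_lt_of_le hjx (hs.1 x hxt)) (by omega)
    | succ i =>
      simp only [List.getD_cons_succ]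
      have hi' : i < t.length := by simpa using hi
      rw [ih hs.2 i hi']
      by_cases hja : j < a
      · rw [col_cons_pos a t j hja]; omega
      · rw [col_cons_neg a t j hja]
        have hcol0 : col t j = 0 := by
          simp only [col]
          rw [List.length_eq_zero_iff]
          apply List.filter_eq_nil_iff.mpr
          intro x hx
          have := hs.1 x hx
          simp; omega
        have hmem : t.getD i 0 ∈ t := by
          rw [List.getD_eq_getElem _ _ hi']; exact List.getElem_mem _
        have := hs.1 _ hmem
        rw [hcol0]
        omega


lemma dich_le (l : List ℕ) (hl : l.Pairwise (· ≥ ·)) (k j : ℕ) (hk : k < l.length)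
    (h : l.getD k 0 ≤ j) : beta l k < gapf l j := by
  have h1 : ¬ (k < col l j) := by
    rw [← col_iff l hl k j hk]; omega
  have h2 := col_le l j
  unfold beta gapf
  omega

lemma dich_gt (l : List ℕ) (hl : l.Pairwise (· ≥ ·)) (k j : ℕ) (hk : k < l.length)
    (h : j < l.getD k 0) : gapf l j < beta l k := by
  have h1 : k < col l j := (col_iff l hl k j hk).mp h
  have h2 := col_le l j
  unfold beta gapf
  omega

lemma hook_eq (l : List ℕ) (hl : l.Pairwise (· ≥ ·)) (i j : ℕ) (hi : i < l.length)
    (hj : j < l.getD i 0) : hookLength l i j = beta l i - gapf l j := by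
  have h1 : i < col l j := (col_iff l hl i j hi).mp hj
  have h2 := col_le l j
  unfold hookLength beta gapf
  show (l.getD i 0 - j - 1) + (col l j - i - 1) + 1 = _
  omega

lemma beta_mem (l : List ℕ) (b : ℕ) : b ∈ beadSet l ↔ ∃ i < l.length, beta l i = b := by
  simp [beadSet, beta]

lemma gapf_zero (l : List ℕ) (hpos : ∀ x ∈ l, 0 < x) : gapf l 0 = 0 := by
  have : col l 0 = l.length := by
    unfold col
    rw [List.length_filter_eq_length_iff]
    intro x hx
    simpa using hpos x hx
  unfold gapf
  omega

lemma gapf_mono (l : List ℕ) (j : ℕ) : gapf l j + 1 ≤ gapf l (j + 1) := by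
  have h : col l (j+1) ≤ col l j := by
    unfold col
    rw [← List.countP_eq_length_filter, ← List.countP_eq_length_filter]
    apply List.countP_mono_left
    intro x hx h
    simp at h ⊢
    omega
  have h2 := col_le l j
  unfold gapf
  omega

lemma gapf_ge (l : List ℕ) (j : ℕ) : j ≤ gapf l j := by unfold gapf; omega

/-- surjectivity of gapf onto complement of beads -/
lemma gapf_surj (l : List ℕ) (hl : IsPartition l) (g : ℕ)
    (hg : ∀ k < l.length, beta l k ≠ g) : ∃ j, gapf l j = g := by
  obtain ⟨hsort, hpos⟩ := hl
  -- find max j with gapf l j ≤ g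
  have hex : ∃ j, g < gapf l (j + 1) := ⟨g, lt_of_lt_of_le (Nat.lt_succ_self g) (gapf_ge l (g+1))⟩
  classical
  obtain ⟨j, hj1, hj2⟩ : ∃ j, g < gapf l (j + 1) ∧ ∀ j' < j, ¬ g < gapf l (j' + 1) :=
    ⟨Nat.find hex, Nat.find_spec hex, fun j' h => Nat.find_min hex h⟩
  have hle : gapf l j ≤ g := by
    cases j with
    | zero => rw [gapf_zero l hpos]; omega
    | succ j' =>
      have := hj2 j' (Nat.lt_succ_self j')
      omega
  rcases eq_or_lt_of_le hle with he | hlt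
  · exact ⟨j, he⟩
  -- gapf l j < g < gapf l (j+1): show g is a beta, contradiction
  exfalso
  set n := l.length
  have hcolj := col_le l j
  have hcolj1 := col_le l (j+1)
  -- k := j + n - g
  unfold gapf at hlt hj1
  have hk1 : j + n - g < col l j := by omega
  have hk2 : col l (j+1) ≤ j + n - g := by omega
  set k := j + n - g with hk
  have hkn : k < n := lt_of_lt_of_le hk1 hcolj
  have hp1 : j < l.getD k 0 := (col_iff l hsort k j hkn).mpr hk1
  have hp2 : ¬ (j + 1 < l.getD k 0) := by
    rw [col_iff l hsort k (j+1) hkn]; omega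
  have : beta l k = g := by
    unfold beta
    omega
  exact hg k hkn this

/-- The abacus lemma -/
theorem isCore_iff (l : List ℕ) (hl : IsPartition l) (s : ℕ) :
    IsCore s l ↔ ∀ b ∈ beadSet l, s ≤ b → b - s ∈ beadSet l := by
  constructor
  · intro hcore b hb hsb
    by_contra hns
    apply hcore
    rw [beta_mem] at hb
    obtain ⟨i, hi, hbi⟩ := hb
    have hs0 : s ≠ 0 := by
      intro h
      subst h
      rw [Nat.sub_zero, ← hbi] at hns
      exact hns ((beta_mem l _).mpr ⟨i, hi, rfl⟩)
    have hgnb : ∀ k < l.length, beta l k ≠ b - s := by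
      intro k hk hc
      exact hns (by rw [← hc]; exact (beta_mem l _).mpr ⟨k, hk, rfl⟩)
    obtain ⟨j, hj⟩ := gapf_surj l hl (b - s) hgnb
    have hjlt : j < l.getD i 0 := by
      by_contra hc
      push_neg at hc
      have := dich_le l hl.1 i j hi hc
      omega
    refine ⟨i, j, hjlt, ?_⟩
    rw [hook_eq l hl.1 i j hi hjlt, hj, hbi]
    omega
  · intro hcl hhook
    obtain ⟨i, j, hj, hhl⟩ := hhook
    have hi : i < l.length := by
      by_contra h
      push_neg at h
      rw [List.getD_eq_default _ _ h] at hj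
      omega
    have hlt : gapf l j < beta l i := dich_gt l hl.1 i j hi hj
    rw [hook_eq l hl.1 i j hi hj] at hhl
    have hbmem : beta l i ∈ beadSet l := (beta_mem l _).mpr ⟨i, hi, rfl⟩
    have hsub : beta l i - s = gapf l j := by omega
    have := hcl _ hbmem (by omega)
    rw [hsub] at this
    rw [beta_mem] at this
    obtain ⟨k, hk, hbk⟩ := this
    rcases le_or_gt (l.getD k 0) j with h | h
    · exact absurd hbk (by have := dich_le l hl.1 k j hk h; omega)
    · exact absurd hbk (by have := dich_gt l hl.1 k j hk h; omega)


def gap2 (B : Finset ℕ) : Prop := ∀ a ∈ B, ∀ b ∈ B, a < b → a + 2 ≤ b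

def sclosed (s : ℕ) (B : Finset ℕ) : Prop := ∀ b ∈ B, s ≤ b → b - s ∈ B

lemma isCore_iff' (l : List ℕ) (hl : IsPartition l) (s : ℕ) :
    IsCore s l ↔ sclosed s (beadSet l) := isCore_iff l hl s

lemma part_strict (l : List ℕ) (hl : IsPartition l) (hnd : l.Nodup) :
    l.Pairwise (· > ·) := by
  rw [List.pairwise_iff_getElem] at *
  intro i j hi hj hij
  have h1 := (List.pairwise_iff_getElem.mp (show l.Pairwise (· ≥ ·) from hl.1)) i j hi hj hij
  have h2 := (List.pairwise_iff_getElem.mp hnd) i j hi hj hij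
  omega

lemma partChain (l : List ℕ) (hstrict : l.Pairwise (· > ·)) :
    ∀ i j, i ≤ j → j < l.length → l.getD j 0 + (j - i) ≤ l.getD i 0 := by
  intro i j hij hj
  induction j, hij using Nat.le_induction with
  | base => omega
  | succ j hij ih =>
    have h1 : l.getD (j+1) 0 < l.getD j 0 := by
      rw [List.getD_eq_getElem _ _ (by omega : j + 1 < l.length),
        List.getD_eq_getElem _ _ (by omega : j < l.length)]
      exact (List.pairwise_iff_getElem.mp hstrict) j (j+1) (by omega) (by omega) (by omega)
    have := ih (by omega)
    omega

lemma betaGap (l : List ℕ) (hstrict : l.Pairwise (· > ·)) (i j : ℕ) (hij : i < j)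
    (hj : j < l.length) : beta l j + 2 * (j - i) ≤ beta l i := by
  have h1 := partChain l hstrict i j (by omega) hj
  unfold beta
  omega

lemma beadSet_gap2 (l : List ℕ) (hl : IsPartition l) (hnd : l.Nodup) :
    gap2 (beadSet l) := by
  intro a ha b hb hab
  rw [beta_mem] at ha hb
  obtain ⟨i, hi, rfl⟩ := ha
  obtain ⟨k, hk, rfl⟩ := hb
  have hstrict := part_strict l hl hnd
  rcases lt_trichotomy i k with h | h | h
  · have := betaGap l hstrict i k h hk; omega
  · subst h; omega
  · have := betaGap l hstrict k i h hi; omega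

lemma beadSet_pos (l : List ℕ) (hl : IsPartition l) : 0 ∉ beadSet l := by
  rw [beta_mem]
  rintro ⟨i, hi, hbi⟩
  have hmem : l.getD i 0 ∈ l := by
    rw [List.getD_eq_getElem _ _ hi]; exact List.getElem_mem _
  have := hl.2 _ hmem
  unfold beta at hbi
  omega

def betaList (l : List ℕ) : List ℕ := (List.range l.length).map (beta l)

lemma betaList_sorted (l : List ℕ) (hstrict : l.Pairwise (· > ·)) :
    (betaList l).Pairwise (· > ·) := by
  rw [List.pairwise_iff_getElem]
  intro i j hi hj hij
  simp only [betaList, List.length_map, List.length_range] at hi hj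
  simp only [betaList, List.getElem_map, List.getElem_range]
  have := betaGap l hstrict i j hij hj
  omega

lemma betaList_toFinset (l : List ℕ) : (betaList l).toFinset = beadSet l := by
  ext b
  simp only [betaList, beadSet, List.mem_toFinset, List.mem_map, List.mem_range,
    Finset.mem_image, Finset.mem_range]
  rfl

instance : IsAntisymm ℕ (· > ·) := ⟨fun a b h1 h2 => by omega⟩

lemma nodup_of_pairwise_gt (L : List ℕ) (h : L.Pairwise (· > ·)) : L.Nodup :=
  h.imp (fun h => ne_of_gt h)

lemma beadSet_injOn (l l' : List ℕ) (hl : IsPartition l) (hnd : l.Nodup)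
    (hl' : IsPartition l') (hnd' : l'.Nodup) (he : beadSet l = beadSet l') : l = l' := by
  have hs := betaList_sorted l (part_strict l hl hnd)
  have hs' := betaList_sorted l' (part_strict l' hl' hnd')
  have hperm : (betaList l).Perm (betaList l') := by
    apply List.perm_of_nodup_nodup_toFinset_eq (nodup_of_pairwise_gt _ hs)
      (nodup_of_pairwise_gt _ hs')
    rw [betaList_toFinset, betaList_toFinset, he]
  have heq : betaList l = betaList l' := List.Perm.eq_of_pairwise (fun a b _ _ h1 h2 => by omega) hs hs' hperm
  have hlen : l.length = l'.length := by
    have := congrArg List.length heq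
    simpa [betaList] using this
  apply List.ext_getElem hlen
  intro i hi hi'
  have h1 : beta l i = beta l' i := by
    have := congrArg (fun L => L.getD i 0) heq
    simpa [betaList, List.getD_eq_getElem, List.getElem_map, List.getElem_range, hi, hi',
      List.getD_map, hlen ▸ hi] using this
  unfold beta at h1
  rw [List.getD_eq_getElem _ _ hi, List.getD_eq_getElem _ _ hi'] at h1
  omega

def unbead (B : Finset ℕ) : List ℕ :=
  (List.range B.card).map
    (fun i => ((B.sort (· ≤ ·)).reverse).getD i 0 - (B.card - 1 - i))

lemma mem_iff_getD (D : List ℕ) (b : ℕ) : b ∈ D ↔ ∃ i < D.length, D.getD i 0 = b := by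
  constructor
  · intro h
    obtain ⟨i, hi, hgi⟩ := List.mem_iff_getElem.mp h
    exact ⟨i, hi, by rw [List.getD_eq_getElem _ _ hi]; exact hgi⟩
  · rintro ⟨i, hi, hgi⟩
    rw [← hgi, List.getD_eq_getElem _ _ hi]
    exact List.getElem_mem _

lemma unbead_spec (B : Finset ℕ) (h0 : 0 ∉ B) (hg : gap2 B) :
    IsPartition (unbead B) ∧ (unbead B).Nodup ∧ beadSet (unbead B) = B := by
  set n := B.card with hn
  set D := (B.sort (· ≤ ·)).reverse with hD
  have hDlen : D.length = n := by simp [hD, hn]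
  have hDsorted : D.Pairwise (· > ·) := by
    rw [hD, List.pairwise_reverse]
    exact (Finset.sortedLT_sort B).pairwise
  have hDmem : ∀ i < n, D.getD i 0 ∈ B := by
    intro i hi
    have : D.getD i 0 ∈ D := (mem_iff_getD D _).mpr ⟨i, by omega, rfl⟩
    rw [hD, List.mem_reverse, Finset.mem_sort] at this
    exact this
  have hD1 : ∀ i < n, 1 ≤ D.getD i 0 := by
    intro i hi
    have := hDmem i hi
    rcases Nat.eq_zero_or_pos (D.getD i 0) with h | h
    · rw [h] at this; exact absurd this h0
    · omega
  have hDChain : ∀ i j, i ≤ j → j < n → D.getD j 0 + 2*(j-i) ≤ D.getD i 0 := by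
    intro i j hij hj
    induction j, hij using Nat.le_induction with
    | base => omega
    | succ j hij ih =>
      have hlt : D.getD (j+1) 0 < D.getD j 0 := by
        rw [List.getD_eq_getElem _ _ (by omega : j + 1 < D.length),
          List.getD_eq_getElem _ _ (by omega : j < D.length)]
        exact (List.pairwise_iff_getElem.mp hDsorted) j (j+1) (by omega) (by omega) (by omega)
      have hgap := hg _ (hDmem (j+1) (by omega)) _ (hDmem j (by omega)) hlt
      have := ih (by omega)
      omega
  have hDlow : ∀ i < n, n - 1 - i + 1 ≤ D.getD i 0 := by
    intro i hi
    have h1 := hDChain i (n-1) (by omega) (by omega)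
    have h2 := hD1 (n-1) (by omega)
    omega
  have hulen : (unbead B).length = n := by simp [unbead, hn]
  have hpart : ∀ i < n, (unbead B).getD i 0 = D.getD i 0 - (n - 1 - i) := by
    intro i hi
    rw [List.getD_eq_getElem _ _ (by rw [hulen]; exact hi)]
    simp [unbead, hn, hD, hi]
  refine ⟨⟨?_, ?_⟩, ?_, ?_⟩
  · show (unbead B).Pairwise _
    rw [List.pairwise_iff_getElem]
    intro i j hi hj hij
    rw [hulen] at hi hj
    rw [← List.getD_eq_getElem _ 0 (by rw [hulen]; exact hi),
      ← List.getD_eq_getElem _ 0 (by rw [hulen]; exact hj), hpart i hi, hpart j hj]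
    have h1 := hDChain i j (by omega) hj
    have h2 := hDlow j hj
    simp only [ge_iff_le]
    omega
  · intro x hx
    obtain ⟨i, hi, hgi⟩ := List.mem_iff_getElem.mp hx
    rw [hulen] at hi
    rw [← List.getD_eq_getElem _ 0 (by rw [hulen]; exact hi), hpart i hi] at hgi
    have h2 := hDlow i hi
    omega
  · show (unbead B).Pairwise _
    rw [List.pairwise_iff_getElem]
    intro i j hi hj hij
    rw [hulen] at hi hj
    rw [← List.getD_eq_getElem _ 0 (by rw [hulen]; exact hi),
      ← List.getD_eq_getElem _ 0 (by rw [hulen]; exact hj), hpart i hi, hpart j hj]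
    have h1 := hDChain i j (by omega) hj
    have h2 := hDlow j hj
    omega
  · ext b
    rw [beta_mem]
    constructor
    · rintro ⟨i, hi, rfl⟩
      rw [hulen] at hi
      have : beta (unbead B) i = D.getD i 0 := by
        unfold beta
        rw [hulen, hpart i hi]
        have := hDlow i hi
        omega
      rw [this]
      exact hDmem i hi
    · intro hb
      have : b ∈ D := by rw [hD, List.mem_reverse, Finset.mem_sort]; exact hb
      obtain ⟨i, hi, hgi⟩ := (mem_iff_getD D b).mp this
      rw [hDlen] at hi
      refine ⟨i, by rw [hulen]; exact hi, ?_⟩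
      unfold beta
      rw [hulen, hpart i hi]
      have := hDlow i hi
      omega


instance gap2_dec (B : Finset ℕ) : Decidable (gap2 B) := by unfold gap2; infer_instance
instance sclosed_dec (q : ℕ) (B : Finset ℕ) : Decidable (sclosed q B) := by
  unfold sclosed; infer_instance

def okSet (q N : ℕ) : Finset (Finset ℕ) :=
  (Finset.Icc 1 N).powerset.filter (fun B => gap2 B ∧ sclosed q B)

lemma mem_okSet (q N : ℕ) (B : Finset ℕ) :
    B ∈ okSet q N ↔ (∀ b ∈ B, 1 ≤ b ∧ b ≤ N) ∧ gap2 B ∧ sclosed q B := by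
  unfold okSet
  rw [Finset.mem_filter, Finset.mem_powerset]
  constructor
  · rintro ⟨h1, h2⟩
    exact ⟨fun b hb => by have := h1 hb; rw [Finset.mem_Icc] at this; omega, h2⟩
  · rintro ⟨h1, h2⟩
    exact ⟨fun b hb => by rw [Finset.mem_Icc]; have := h1 b hb; omega, h2⟩

lemma iterchain (q : ℕ) (B : Finset ℕ) (hc : sclosed q B) (b : ℕ) (hb : b ∈ B) :
    ∀ k, k * q ≤ b → b - k * q ∈ B := by
  intro k
  induction k with
  | zero => simpa using hb
  | succ k ih =>
    intro hk
    rw [Nat.succ_mul] at hk ⊢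
    have h1 : b - k * q ∈ B := ih (by omega)
    have := hc _ h1 (by omega)
    have he : b - k * q - q = b - (k * q + q) := by omega
    rwa [he] at this

lemma bound_minus (m s : ℕ) (hm : 1 ≤ m) (hs : 3 ≤ s) (B : Finset ℕ) (hg : gap2 B)
    (h0 : 0 ∉ B) (hc1 : sclosed s B) (hc2 : sclosed (m * s - 1) B) :
    ∀ b ∈ B, b ≤ m * s - 2 := by
  intro b hb
  have hms : 3 ≤ m * s := le_trans hs (Nat.le_mul_of_pos_left s hm)
  by_contra hcon
  push_neg at hcon
  rcases eq_or_lt_of_le (show m * s - 1 ≤ b by omega) with he | hlt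
  · have := hc2 _ hb (by omega)
    rw [← he, Nat.sub_self] at this
    exact h0 this
  · -- b ≥ m * s
    have h1 : b - m * s ∈ B := iterchain s B hc1 b hb m (by omega)
    have h2 : b - (m * s - 1) ∈ B := hc2 _ hb (by omega)
    have := hg _ h1 _ h2 (by omega)
    omega

lemma bound_plus (m s : ℕ) (hm : 1 ≤ m) (hs : 1 ≤ s) (B : Finset ℕ) (hg : gap2 B)
    (h0 : 0 ∉ B) (hc1 : sclosed s B) (hc2 : sclosed (m * s + 1) B) :
    ∀ b ∈ B, b ≤ m * s - 1 := by
  intro b hb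
  have hms : 1 ≤ m * s := le_trans hs (Nat.le_mul_of_pos_left s hm)
  by_contra hcon
  push_neg at hcon
  rcases eq_or_lt_of_le (show m * s ≤ b by omega) with he | hlt
  · have := iterchain s B hc1 b hb m (by omega)
    rw [← he, Nat.sub_self] at this
    exact h0 this
  · have h1 : b - m * s ∈ B := iterchain s B hc1 b hb m (by omega)
    have h2 : b - (m * s + 1) ∈ B := hc2 _ hb (by omega)
    have := hg _ h2 _ h1 (by omega)
    omega

lemma ncard_bridge (q t N : ℕ)
    (hbound : ∀ B : Finset ℕ, gap2 B → 0 ∉ B → sclosed q B → sclosed t B →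
      ∀ b ∈ B, b ≤ N)
    (hvac : N < t) :
    {l : List ℕ | IsPartition l ∧ l.Nodup ∧ IsCore q l ∧ IsCore t l}.ncard
      = (okSet q N).card := by
  set S := {l : List ℕ | IsPartition l ∧ l.Nodup ∧ IsCore q l ∧ IsCore t l} with hS
  have hinj : Set.InjOn beadSet S := by
    intro l hl l' hl' he
    exact beadSet_injOn l l' hl.1 hl.2.1 hl'.1 hl'.2.1 he
  have himg : beadSet '' S = ↑(okSet q N) := by
    ext B
    simp only [Set.mem_image, Finset.coe_sort_coe, Finset.mem_coe]
    rw [mem_okSet]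
    constructor
    · rintro ⟨l, ⟨hp, hnd, hq, ht⟩, rfl⟩
      have hg := beadSet_gap2 l hp hnd
      have h0 := beadSet_pos l hp
      have hcq := (isCore_iff' l hp q).mp hq
      have hct := (isCore_iff' l hp t).mp ht
      refine ⟨fun b hb => ⟨?_, hbound _ hg h0 hcq hct b hb⟩, hg, hcq⟩
      rcases Nat.eq_zero_or_pos b with h | h
      · rw [h] at hb; exact absurd hb h0
      · omega
    · rintro ⟨hsub, hg, hcq⟩
      have h0 : 0 ∉ B := fun h => by have := hsub 0 h; omega
      obtain ⟨hp, hnd, hbs⟩ := unbead_spec B h0 hg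
      refine ⟨unbead B, ⟨hp, hnd, ?_, ?_⟩, hbs⟩
      · rw [isCore_iff' _ hp, hbs]; exact hcq
      · rw [isCore_iff' _ hp, hbs]
        intro b hb htb
        have := hsub b hb
        omega
  rw [← Set.ncard_coe_finset, ← himg, Set.ncard_image_of_injOn hinj]


lemma ndvd (q : ℕ) (hq : 1 ≤ q) (B : Finset ℕ) (hc : sclosed q B) (h0 : 0 ∉ B) :
    ∀ b ∈ B, b % q ≠ 0 := by
  intro b
  induction b using Nat.strong_induction_on with
  | _ b ih =>
    intro hb
    rcases lt_or_ge b q with h | h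
    · intro hmod
      rw [Nat.mod_eq_of_lt h] at hmod
      rw [hmod] at hb
      exact h0 hb
    · have h1 : b - q ∈ B := hc b hb h
      have h2 := ih (b - q) (by omega) h1
      rw [show b = b - q + q by omega, Nat.add_mod_right]
      exact h2

lemma chain_down (q : ℕ) (B : Finset ℕ) (hc : sclosed q B) (r j : ℕ)
    (hb : r + j * q ∈ B) : ∀ j' ≤ j, r + j' * q ∈ B := by
  intro j' hj'
  have h1 : (j - j') * q ≤ r + j * q := by
    have : (j - j') * q = j * q - j' * q := Nat.sub_mul j j' q
    have h2 : j' * q ≤ j * q := Nat.mul_le_mul_right q hj'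
    omega
  have := iterchain q B hc _ hb (j - j') h1
  have he : r + j * q - (j - j') * q = r + j' * q := by
    have : (j - j') * q = j * q - j' * q := Nat.sub_mul j j' q
    have h2 : j' * q ≤ j * q := Nat.mul_le_mul_right q hj'
    omega
  rwa [he] at this

/-- uniqueness of division -/
lemma uniq_div (q r r' j j' : ℕ) (hr : r < q) (hr' : r' < q)
    (he : r + j * q = r' + j' * q) : r = r' ∧ j = j' := by
  have h1 : (r + j * q) % q = r := by
    rw [Nat.add_mul_mod_self_right, Nat.mod_eq_of_lt hr]
  have h2 : (r' + j' * q) % q = r' := by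
    rw [Nat.add_mul_mod_self_right, Nat.mod_eq_of_lt hr']
  have hrr : r = r' := by rw [← h1, ← h2, he]
  subst hrr
  have : j * q = j' * q := by omega
  have hq : 0 < q := by omega
  exact ⟨rfl, Nat.eq_of_mul_eq_mul_right hq this⟩

lemma succ_decomp (q r₁ j₁ r₂ j₂ : ℕ) (h1 : r₁ < q) (h2 : r₂ < q)
    (he : r₂ + j₂ * q = r₁ + j₁ * q + 1) :
    (r₂ = r₁ + 1 ∧ j₂ = j₁) ∨ (r₁ + 1 = q ∧ r₂ = 0 ∧ j₂ = j₁ + 1) := by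
  rcases lt_or_ge (r₁ + 1) q with h | h
  · left
    have := uniq_div q (r₁ + 1) r₂ j₁ j₂ h h2 (by omega)
    omega
  · right
    have hq : r₁ + 1 = q := by omega
    have he2 : r₂ + j₂ * q = 0 + (j₁ + 1) * q := by
      rw [Nat.succ_mul]
      omega
    have := uniq_div q r₂ 0 j₂ (j₁ + 1) h2 (by omega) he2
    omega

def fwd (q t : ℕ) : ℕ → ℕ := fun b => b % q + (b / q) * t

lemma fwd_spec (q t b : ℕ) (ht : b % q < t) :
    (fwd q t b) % t = b % q ∧ (fwd q t b) / t = b / q := by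
  unfold fwd
  constructor
  · rw [Nat.add_mul_mod_self_right, Nat.mod_eq_of_lt ht]
  · rw [Nat.add_mul_div_right _ _ (by omega : 0 < t), Nat.div_eq_of_lt ht]
    omega

lemma fwd_decomp (q t b : ℕ) : fwd q t b = b % q + (b / q) * t := rfl

lemma fwd_roundtrip (q t b : ℕ) (ht : b % q < t) (hq : 0 < q) :
    fwd t q (fwd q t b) = b := by
  obtain ⟨h1, h2⟩ := fwd_spec q t b ht
  have he : fwd t q (fwd q t b) = (fwd q t b) % t + ((fwd q t b) / t) * q := rfl
  rw [he, h1, h2]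
  exact Nat.mod_add_div' b q

/-- downward closed finsets of ℕ are initial segments -/
lemma dc_card (S : Finset ℕ) (dc : ∀ j k, j ≤ k → k ∈ S → j ∈ S) (j : ℕ) :
    j ∈ S ↔ j < S.card := by
  constructor
  · intro hj
    have hsub : Finset.range (j + 1) ⊆ S := by
      intro x hx
      rw [Finset.mem_range] at hx
      exact dc x j (by omega) hj
    have := Finset.card_le_card hsub
    rw [Finset.card_range] at this
    omega
  · intro hj
    by_contra hns
    have hsub : S ⊆ Finset.range j := by
      intro k hk
      rw [Finset.mem_range]
      by_contra hc
      exact hns (dc j k (by omega) hk)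
    have := Finset.card_le_card hsub
    rw [Finset.card_range] at this
    omega


def vOf (m s : ℕ) (B : Finset ℕ) : ℕ :=
  ((Finset.range m).filter (fun j => s - 1 + j * s ∈ B)).card

lemma vOf_iff (m s : ℕ) (hm : 1 ≤ m) (hs : 3 ≤ s) (B : Finset ℕ)
    (hB : B ∈ okSet s (m * s - 2)) (j : ℕ) :
    s - 1 + j * s ∈ B ↔ j < vOf m s B := by
  rw [mem_okSet] at hB
  obtain ⟨hsub, hg, hc⟩ := hB
  have hms : s ≤ m * s := Nat.le_mul_of_pos_left s hm
  set S := (Finset.range m).filter (fun j => s - 1 + j * s ∈ B) with hS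
  have hdc : ∀ j k, j ≤ k → k ∈ S → j ∈ S := by
    intro j k hjk hk
    rw [hS, Finset.mem_filter, Finset.mem_range] at hk ⊢
    exact ⟨by omega, chain_down s B hc _ _ hk.2 j hjk⟩
  have hiff := dc_card S hdc
  have hmem : ∀ j, s - 1 + j * s ∈ B ↔ j ∈ S := by
    intro j
    rw [hS, Finset.mem_filter, Finset.mem_range]
    constructor
    · intro h
      refine ⟨?_, h⟩
      by_contra hcon
      push_neg at hcon
      have h1 : m * s ≤ j * s := Nat.mul_le_mul_right s hcon
      have := (hsub _ h).2
      omega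
    · exact fun h => h.2
  rw [hmem j, hiff j]
  unfold vOf
  rw [← hS]

lemma vOf_le (m s : ℕ) (hm : 1 ≤ m) (hs : 3 ≤ s) (B : Finset ℕ)
    (hB : B ∈ okSet s (m * s - 2)) : vOf m s B ≤ m - 1 := by
  by_contra h
  push_neg at h
  have h2 : s - 1 + (m - 1) * s ∈ B := by
    rw [vOf_iff m s hm hs B hB]
    omega
  rw [mem_okSet] at hB
  have := (hB.1 _ h2).2
  have h3 : (m - 1) * s = m * s - s := Nat.sub_one_mul m s
  have hms : s ≤ m * s := Nat.le_mul_of_pos_left s hm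
  omega

lemma gap2_subset (B C : Finset ℕ) (h : C ⊆ B) (hg : gap2 B) : gap2 C :=
  fun a ha b hb hab => hg a (h ha) b (h hb) hab

lemma sub_mod_div (q b : ℕ) (hq : 0 < q) (hb : q ≤ b) :
    (b - q) % q = b % q ∧ (b - q) / q = b / q - 1 := by
  have h1 : b = (b - q) + q := by omega
  constructor
  · conv_rhs => rw [h1]
    rw [Nat.add_mod_right]
  · have h2 : (b - q + q) / q = (b - q) / q + 1 := Nat.add_div_right _ hq
    rw [← h1] at h2
    rw [h2, Nat.add_sub_cancel]

/-- Generic reindexing lemma: map residue-chains mod q to residue-chains mod t. -/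
lemma remap (q t R J M : ℕ) (hq : 1 ≤ q) (hRt : R < t) (hbound : R + J * t ≤ M)
    (B : Finset ℕ)
    (hfacts : ∀ b ∈ B, 1 ≤ b % q ∧ b % q ≤ R ∧ b / q ≤ J)
    (hgap : gap2 B) (hcl : sclosed q B) :
    (∀ x ∈ B.image (fwd q t), 1 ≤ x ∧ x ≤ M) ∧ gap2 (B.image (fwd q t)) ∧
      sclosed t (B.image (fwd q t)) ∧
      (∀ x ∈ B.image (fwd q t), 1 ≤ x % t ∧ x % t ≤ R ∧ x / t ≤ J) := by
  have hrq : ∀ b ∈ B, b % q < q := fun b _ => Nat.mod_lt b (by omega)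
  have hxfact : ∀ b ∈ B, (fwd q t b) % t = b % q ∧ (fwd q t b) / t = b / q :=
    fun b hb => fwd_spec q t b (by have := (hfacts b hb).2.1; omega)
  refine ⟨?_, ?_, ?_, ?_⟩
  · intro x hx
    obtain ⟨b, hb, rfl⟩ := Finset.mem_image.mp hx
    obtain ⟨f1, f2, f3⟩ := hfacts b hb
    rw [fwd_decomp]
    have h1 : (b / q) * t ≤ J * t := Nat.mul_le_mul_right t f3
    omega
  · intro a ha b hb hab
    by_contra hcon
    push_neg at hcon
    have hbe : b = a + 1 := by omega
    obtain ⟨ba, hba, rfl⟩ := Finset.mem_image.mp ha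
    obtain ⟨bb, hbb, rfl⟩ := Finset.mem_image.mp hb
    obtain ⟨fa1, fa2, fa3⟩ := hfacts ba hba
    obtain ⟨fb1, fb2, fb3⟩ := hfacts bb hbb
    have hda : fwd q t ba = ba % q + (ba / q) * t := rfl
    have hdb : fwd q t bb = bb % q + (bb / q) * t := rfl
    have hsd := succ_decomp t (ba % q) (ba / q) (bb % q) (bb / q)
      (by omega) (by omega) (by omega)
    rcases hsd with ⟨h1, h2⟩ | ⟨h1, h2, h3⟩
    · -- bb ≡ ba + 1 in original
      have hba_d : ba % q + (ba / q) * q = ba := Nat.mod_add_div' ba q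
      have hbb_d : bb % q + (bb / q) * q = bb := Nat.mod_add_div' bb q
      have h4 : (bb / q) * q = (ba / q) * q := by rw [h2]
      have : bb = ba + 1 := by omega
      have := hgap ba hba bb hbb (by omega)
      omega
    · omega
  · intro x hx hge
    obtain ⟨b, hb, rfl⟩ := Finset.mem_image.mp hx
    obtain ⟨f1, f2, f3⟩ := hfacts b hb
    have hd : fwd q t b = b % q + (b / q) * t := rfl
    have hj1 : 1 ≤ b / q := by
      by_contra hcon
      have hz : b / q = 0 := Nat.lt_one_iff.mp (lt_of_not_ge hcon)
      rw [hd, hz, Nat.zero_mul, Nat.add_zero] at hge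
      omega
    have hqb : q ≤ b := by
      have h1 : 1 * q ≤ (b / q) * q := Nat.mul_le_mul_right q hj1
      have h2 : b % q + (b / q) * q = b := Nat.mod_add_div' b q
      omega
    have hmem : b - q ∈ B := hcl b hb hqb
    obtain ⟨g1, g2⟩ := sub_mod_div q b (by omega) hqb
    rw [Finset.mem_image]
    refine ⟨b - q, hmem, ?_⟩
    have hd2 : fwd q t (b - q) = (b - q) % q + ((b - q) / q) * t := rfl
    rw [hd2, g1, g2]
    have h3 : (b / q - 1) * t = (b / q) * t - t := Nat.sub_one_mul _ t
    have h4 : 1 * t ≤ (b / q) * t := Nat.mul_le_mul_right t hj1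
    omega
  · intro x hx
    obtain ⟨b, hb, rfl⟩ := Finset.mem_image.mp hx
    obtain ⟨f1, f2, f3⟩ := hfacts b hb
    obtain ⟨g1, g2⟩ := hxfact b hb
    omega


lemma factsOk (m q N : ℕ) (hq : 1 ≤ q) (hNm : N < m * q) (B : Finset ℕ)
    (hB : B ∈ okSet q N) : ∀ b ∈ B, 1 ≤ b % q ∧ b % q < q ∧ b / q ≤ m - 1 := by
  rw [mem_okSet] at hB
  obtain ⟨hsub, hg, hc⟩ := hB
  intro b hb
  have h0 : 0 ∉ B := fun h => by have := (hsub 0 h).1; omega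
  have h1 := ndvd q hq B hc h0 b hb
  have h2 : b % q < q := Nat.mod_lt b (by omega)
  have h3 : b / q < m := (Nat.div_lt_iff_lt_mul (by omega : 0 < q)).mpr
    (by have := (hsub b hb).2; omega)
  exact ⟨by omega, h2, Nat.le_pred_of_lt h3⟩

/-- residue refinement for the v = 0 branch -/
lemma resX0 (m s : ℕ) (hm : 1 ≤ m) (hs : 3 ≤ s) (B : Finset ℕ)
    (hB : B ∈ okSet s (m * s - 2)) (hv : vOf m s B = 0) :
    ∀ b ∈ B, b % s ≤ s - 2 := by
  intro b hb
  have hf := factsOk m s (m*s-2) (by omega) (by have : s ≤ m*s := Nat.le_mul_of_pos_left s hm; omega) B hB b hb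
  by_contra hcon
  push_neg at hcon
  have hmod : b % s = s - 1 := by omega
  have hd : s - 1 + b / s * s = b := by
    rw [← hmod]; exact Nat.mod_add_div' b s
  have hmem : s - 1 + b / s * s ∈ B := by rw [hd]; exact hb
  have := (vOf_iff m s hm hs B hB (b / s)).mp hmem
  rw [hv] at this
  exact Nat.not_lt_zero _ this

/-- residue refinement for the v ≥ 1 branch -/
lemma resXv (m s : ℕ) (hm : 1 ≤ m) (hs : 3 ≤ s) (B : Finset ℕ)
    (hB : B ∈ okSet s (m * s - 2)) (hv : 1 ≤ vOf m s B) :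
    ∀ b ∈ B, b % s ≠ s - 1 → b % s ≤ s - 3 := by
  intro b hb hne
  have hf := factsOk m s (m*s-2) (by omega) (by have : s ≤ m*s := Nat.le_mul_of_pos_left s hm; omega) B hB b hb
  by_contra hcon
  push_neg at hcon
  have hmod : b % s = s - 2 := by omega
  have hgB : gap2 B := ((mem_okSet _ _ _).mp hB).2.1
  have hcB : sclosed s B := ((mem_okSet _ _ _).mp hB).2.2
  have hd : s - 2 + b / s * s = b := by
    rw [← hmod]; exact Nat.mod_add_div' b s
  have hmem : s - 2 + b / s * s ∈ B := by rw [hd]; exact hb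
  have h2 : s - 2 + 0 * s ∈ B := chain_down s B hcB _ _ hmem 0 (Nat.zero_le _)
  rw [Nat.zero_mul, Nat.add_zero] at h2
  have h3 : s - 1 + 0 * s ∈ B := (vOf_iff m s hm hs B hB 0).mpr hv
  rw [Nat.zero_mul, Nat.add_zero] at h3
  have := hgB _ h2 _ h3 (by omega)
  omega

def phi0 (s : ℕ) (B : Finset ℕ) : Finset ℕ := B.image (fwd s (s-1))
def psi0 (s : ℕ) (B : Finset ℕ) : Finset ℕ := B.image (fwd (s-1) s)
def phiV (s : ℕ) (B : Finset ℕ) : Finset ℕ :=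
  (B.filter (fun b => b % s ≠ s - 1)).image (fwd s (s-2))
def psiV (s v : ℕ) (B : Finset ℕ) : Finset ℕ :=
  B.image (fwd (s-2) s) ∪ (Finset.range v).image (fun j => s - 1 + j * s)

lemma L_phi0 (m s : ℕ) (hm : 1 ≤ m) (hs : 3 ≤ s) (B : Finset ℕ)
    (hB : B ∈ okSet s (m * s - 2)) (hv : vOf m s B = 0) :
    phi0 s B ∈ okSet (s-1) (m * (s-1) - 1) := by
  have hms : s ≤ m * s := Nat.le_mul_of_pos_left s hm
  have hf := factsOk m s (m*s-2) (by omega) (by omega) B hB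
  have hres := resX0 m s hm hs B hB hv
  obtain ⟨hsub, hg, hc⟩ := (mem_okSet _ _ _).mp hB
  have e1 : (m-1) * (s-1) = m * (s-1) - (s-1) := Nat.sub_one_mul m (s-1)
  have e2 : (s-1) ≤ m * (s-1) := Nat.le_mul_of_pos_left (s-1) hm
  have hr := remap s (s-1) (s-2) (m-1) (m * (s-1) - 1) (by omega) (by omega)
    (by omega) B (fun b hb => ⟨(hf b hb).1, hres b hb, (hf b hb).2.2⟩) hg hc
  rw [mem_okSet]
  exact ⟨fun x hx => (hr.1 x hx), hr.2.1, hr.2.2.1⟩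

lemma L_psi0 (m s : ℕ) (hm : 1 ≤ m) (hs : 3 ≤ s) (B : Finset ℕ)
    (hB : B ∈ okSet (s-1) (m * (s-1) - 1)) :
    psi0 s B ∈ okSet s (m * s - 2) ∧ vOf m s (psi0 s B) = 0 := by
  have hms : s ≤ m * s := Nat.le_mul_of_pos_left s hm
  have e1 : (m-1) * s = m * s - s := Nat.sub_one_mul m s
  have e2 : (s-1) ≤ m * (s-1) := Nat.le_mul_of_pos_left (s-1) hm
  have hf := factsOk m (s-1) (m*(s-1)-1) (by omega) (by omega) B hB
  obtain ⟨hsub, hg, hc⟩ := (mem_okSet _ _ _).mp hB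
  have hr := remap (s-1) s (s-2) (m-1) (m * s - 2) (by omega) (by omega)
    (by omega) B (fun b hb => ⟨(hf b hb).1, by have := (hf b hb).2.1; omega, (hf b hb).2.2⟩) hg hc
  constructor
  · rw [mem_okSet]
    exact ⟨fun x hx => (hr.1 x hx), hr.2.1, hr.2.2.1⟩
  · unfold vOf
    rw [Finset.card_eq_zero, Finset.filter_eq_empty_iff]
    intro j _
    intro hmem
    have := (hr.2.2.2 _ hmem).2.1
    have hmod : (s - 1 + j * s) % s = s - 1 := by
      rw [Nat.add_mul_mod_self_right, Nat.mod_eq_of_lt (by omega)]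
    omega

lemma L_phiV (m s : ℕ) (hm : 1 ≤ m) (hs : 3 ≤ s) (B : Finset ℕ)
    (hB : B ∈ okSet s (m * s - 2)) (hv : 1 ≤ vOf m s B) :
    phiV s B ∈ okSet (s-2) (m * (s-2) - 1) := by
  have hms : s ≤ m * s := Nat.le_mul_of_pos_left s hm
  have hf := factsOk m s (m*s-2) (by omega) (by omega) B hB
  have hres := resXv m s hm hs B hB hv
  obtain ⟨hsub, hg, hc⟩ := (mem_okSet _ _ _).mp hB
  set Bf := B.filter (fun b => b % s ≠ s - 1) with hBf
  have hBfsub : Bf ⊆ B := Finset.filter_subset _ _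
  have hgf : gap2 Bf := gap2_subset B Bf hBfsub hg
  have hcf : sclosed s Bf := by
    intro b hb hsb
    rw [hBf, Finset.mem_filter] at hb ⊢
    obtain ⟨g1, g2⟩ := sub_mod_div s b (by omega) hsb
    exact ⟨hc b hb.1 hsb, by rw [g1]; exact hb.2⟩
  have e1 : (m-1) * (s-2) = m * (s-2) - (s-2) := Nat.sub_one_mul m (s-2)
  have e2 : (s-2) ≤ m * (s-2) := Nat.le_mul_of_pos_left (s-2) hm
  have hr := remap s (s-2) (s-3) (m-1) (m * (s-2) - 1) (by omega) (by omega)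
    (by omega) Bf (fun b hb => by
      have h1 := hf b (hBfsub hb)
      have h2 := hres b (hBfsub hb) (by rw [hBf, Finset.mem_filter] at hb; exact hb.2)
      exact ⟨h1.1, h2, h1.2.2⟩) hgf hcf
  rw [mem_okSet]
  exact ⟨fun x hx => (hr.1 x hx), hr.2.1, hr.2.2.1⟩


lemma chain_mod (s j : ℕ) (hs : 3 ≤ s) : (s - 1 + j * s) % s = s - 1 ∧ (s - 1 + j * s) / s = j := by
  constructor
  · rw [Nat.add_mul_mod_self_right, Nat.mod_eq_of_lt (by omega)]
  · rw [Nat.add_mul_div_right _ _ (by omega : 0 < s), Nat.div_eq_of_lt (by omega)]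
    omega

lemma L_psiV (m s : ℕ) (hm : 1 ≤ m) (hs : 3 ≤ s) (v : ℕ) (hv1 : 1 ≤ v) (hv2 : v ≤ m - 1)
    (B : Finset ℕ) (hB : B ∈ okSet (s-2) (m * (s-2) - 1)) :
    psiV s v B ∈ okSet s (m * s - 2) ∧ vOf m s (psiV s v B) = v := by
  have hm2 : 2 ≤ m := by omega
  have hms : s ≤ m * s := Nat.le_mul_of_pos_left s hm
  have hms2 : 2 * s ≤ m * s := Nat.mul_le_mul_right s hm2
  have e1 : (m-1) * s = m * s - s := Nat.sub_one_mul m s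
  have e2 : (m-2) * s = m * s - 2 * s := by
    have := Nat.sub_mul m 2 s; omega
  have hf := factsOk m (s-2) (m*(s-2)-1) (by omega)
    (by have : s - 2 ≤ m * (s-2) := Nat.le_mul_of_pos_left (s-2) hm; omega) B hB
  obtain ⟨hsub, hg, hc⟩ := (mem_okSet _ _ _).mp hB
  have hr := remap (s-2) s (s-3) (m-1) (m * s - 2) (by omega) (by omega)
    (by omega) B (fun b hb => ⟨(hf b hb).1, by have := (hf b hb).2.1; omega, (hf b hb).2.2⟩) hg hc
  set img := B.image (fwd (s-2) s) with himg
  set ch := (Finset.range v).image (fun j => s - 1 + j * s) with hch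
  -- chain membership decomposition
  have hchmem : ∀ x ∈ ch, ∃ j < v, x = s - 1 + j * s := by
    intro x hx
    rw [hch, Finset.mem_image] at hx
    obtain ⟨j, hj, rfl⟩ := hx
    exact ⟨j, Finset.mem_range.mp hj, rfl⟩
  have hchbound : ∀ x ∈ ch, 1 ≤ x ∧ x ≤ m * s - 2 := by
    intro x hx
    obtain ⟨j, hj, rfl⟩ := hchmem x hx
    have hj2 : j ≤ m - 2 := by omega
    have : j * s ≤ (m - 2) * s := Nat.mul_le_mul_right s hj2
    omega
  have himgres : ∀ x ∈ img, 1 ≤ x % s ∧ x % s ≤ s - 3 := by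
    intro x hx
    have := hr.2.2.2 x (by rw [himg] at hx; exact hx)
    omega
  constructor
  · rw [mem_okSet]
    refine ⟨?_, ?_, ?_⟩
    · intro x hx
      rcases Finset.mem_union.mp hx with h | h
      · exact hr.1 x h
      · exact hchbound x h
    · -- gap2
      intro a ha b hb hab
      by_contra hcon
      push_neg at hcon
      have hbe : b = a + 1 := by omega
      rcases Finset.mem_union.mp ha with h1 | h1 <;> rcases Finset.mem_union.mp hb with h2 | h2
      · have := hr.2.1 a h1 b h2 hab; omega
      · -- a in img, b in chain: a = s-2 + j*s has residue s-2, contra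
        obtain ⟨j, hj, rfl⟩ := hchmem b h2
        have ha2 : a = s - 2 + j * s := by omega
        have : a % s = s - 2 := by
          rw [ha2, Nat.add_mul_mod_self_right, Nat.mod_eq_of_lt (by omega)]
        have := himgres a h1
        omega
      · -- a in chain, b in img: b = (j+1)*s has residue 0
        obtain ⟨j, hj, rfl⟩ := hchmem a h1
        have hb2 : b = 0 + (j+1) * s := by rw [Nat.succ_mul]; omega
        have : b % s = 0 := by rw [hb2, Nat.add_mul_mod_self_right]; simp
        have := himgres b h2
        omega
      · obtain ⟨j, hj, rfl⟩ := hchmem a h1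
        obtain ⟨j', hj', he⟩ := hchmem b h2
        rw [he] at hbe
        have hjj : j * s < j' * s := by omega
        have hjlt : j < j' := Nat.lt_of_mul_lt_mul_right hjj
        have : (j + 1) * s ≤ j' * s := Nat.mul_le_mul_right s hjlt
        rw [Nat.succ_mul] at this
        omega
    · -- sclosed
      intro x hx hsx
      rcases Finset.mem_union.mp hx with h | h
      · exact Finset.mem_union_left _ (hr.2.2.1 x h hsx)
      · obtain ⟨j, hj, rfl⟩ := hchmem x h
        have hj1 : 1 ≤ j := by
          by_contra hcon
          have : j = 0 := by omega
          subst this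
          simp at hsx
          omega
        have hsj : s ≤ j * s := Nat.le_mul_of_pos_left s (by omega)
        have e3 : (j-1) * s = j * s - s := Nat.sub_one_mul j s
        apply Finset.mem_union_right
        exact Finset.mem_image.mpr ⟨j - 1, Finset.mem_range.mpr (by omega), by omega⟩
  · -- vOf = v
    unfold vOf
    have hfe : (Finset.range m).filter (fun j => s - 1 + j * s ∈ img ∪ ch) = Finset.range v := by
      ext j
      rw [Finset.mem_filter, Finset.mem_range, Finset.mem_range]
      constructor
      · rintro ⟨hjm, hmem⟩
        rcases Finset.mem_union.mp hmem with h | h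
        · have h1 := (himgres _ h).2
          have h2 := (chain_mod s j hs).1
          omega
        · obtain ⟨j', hj', he⟩ := hchmem _ h
          have h1 := (chain_mod s j hs).2
          have h2 := (chain_mod s j' hs).2
          rw [he] at h1
          omega
      · intro hjv
        refine ⟨by omega, Finset.mem_union_right _ ?_⟩
        exact Finset.mem_image.mpr ⟨j, Finset.mem_range.mpr hjv, rfl⟩
    have hpsi : psiV s v B = img ∪ ch := rfl
    rw [hpsi, hfe, Finset.card_range]


lemma image_roundtrip (q t : ℕ) (hq : 0 < q) (B : Finset ℕ)
    (h : ∀ b ∈ B, b % q < t) : (B.image (fwd q t)).image (fwd t q) = B := by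
  rw [Finset.image_image]
  have he : ∀ b ∈ B, (fwd t q ∘ fwd q t) b = id b := by
    intro b hb
    exact fwd_roundtrip q t b (h b hb) hq
  rw [Finset.image_congr he, Finset.image_id]

lemma RT0a (m s : ℕ) (hm : 1 ≤ m) (hs : 3 ≤ s) (B : Finset ℕ)
    (hB : B ∈ okSet s (m * s - 2)) (hv : vOf m s B = 0) :
    psi0 s (phi0 s B) = B := by
  unfold psi0 phi0
  apply image_roundtrip s (s-1) (by omega)
  intro b hb
  have := resX0 m s hm hs B hB hv b hb
  omega

lemma RT0b (m s : ℕ) (hm : 1 ≤ m) (hs : 3 ≤ s) (B : Finset ℕ)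
    (hB : B ∈ okSet (s-1) (m * (s-1) - 1)) :
    phi0 s (psi0 s B) = B := by
  unfold psi0 phi0
  apply image_roundtrip (s-1) s (by omega)
  intro b hb
  have : b % (s-1) < s - 1 := Nat.mod_lt b (by omega)
  omega

lemma RTVa (m s : ℕ) (hm : 1 ≤ m) (hs : 3 ≤ s) (B : Finset ℕ)
    (hB : B ∈ okSet s (m * s - 2)) (hv : 1 ≤ vOf m s B) :
    psiV s (vOf m s B) (phiV s B) = B := by
  have hms : s ≤ m * s := Nat.le_mul_of_pos_left s hm
  have hf := factsOk m s (m*s-2) (by omega) (by omega) B hB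
  have hres := resXv m s hm hs B hB hv
  unfold psiV phiV
  have h1 : ((B.filter (fun b => b % s ≠ s - 1)).image (fwd s (s-2))).image (fwd (s-2) s)
      = B.filter (fun b => b % s ≠ s - 1) := by
    apply image_roundtrip s (s-2) (by omega)
    intro b hb
    rw [Finset.mem_filter] at hb
    have := hres b hb.1 hb.2
    omega
  rw [h1]
  ext b
  rw [Finset.mem_union, Finset.mem_filter, Finset.mem_image]
  constructor
  · rintro (⟨hb, _⟩ | ⟨j, hj, he⟩)
    · exact hb
    · rw [← he]
      exact (vOf_iff m s hm hs B hB j).mpr (Finset.mem_range.mp hj)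
  · intro hb
    by_cases hmod : b % s = s - 1
    · right
      refine ⟨b / s, Finset.mem_range.mpr ?_, ?_⟩
      · apply (vOf_iff m s hm hs B hB (b/s)).mp
        rw [show s - 1 + b / s * s = b by rw [← hmod]; exact Nat.mod_add_div' b s]
        exact hb
      · rw [← hmod]; exact Nat.mod_add_div' b s
    · left; exact ⟨hb, hmod⟩

lemma RTVb (m s : ℕ) (hm : 1 ≤ m) (hs : 3 ≤ s) (v : ℕ) (hv1 : 1 ≤ v) (hv2 : v ≤ m - 1)
    (B : Finset ℕ) (hB : B ∈ okSet (s-2) (m * (s-2) - 1)) :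
    phiV s (psiV s v B) = B := by
  have hf := factsOk m (s-2) (m*(s-2)-1) (by omega)
    (by have : s - 2 ≤ m * (s-2) := Nat.le_mul_of_pos_left (s-2) hm; omega) B hB
  obtain ⟨hsub, hg, hc⟩ := (mem_okSet _ _ _).mp hB
  have hr := remap (s-2) s (s-3) (m-1) (m * s - 2) (by omega) (by omega)
    (by
      have hms : s ≤ m * s := Nat.le_mul_of_pos_left s hm
      have e1 : (m-1) * s = m * s - s := Nat.sub_one_mul m s
      omega) B (fun b hb => ⟨(hf b hb).1, by have := (hf b hb).2.1; omega, (hf b hb).2.2⟩) hg hc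
  unfold phiV psiV
  rw [Finset.filter_union]
  have h1 : (B.image (fwd (s-2) s)).filter (fun b => b % s ≠ s - 1)
      = B.image (fwd (s-2) s) := by
    apply Finset.filter_true_of_mem
    intro x hx
    have := hr.2.2.2 x hx
    omega
  have h2 : ((Finset.range v).image (fun j => s - 1 + j * s)).filter
      (fun b => b % s ≠ s - 1) = ∅ := by
    rw [Finset.filter_eq_empty_iff]
    intro x hx
    obtain ⟨j, _, rfl⟩ := Finset.mem_image.mp hx
    have := (chain_mod s j hs).1
    simp only [ne_eq, not_not]
    exact this
  rw [h1, h2, Finset.union_empty]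
  apply image_roundtrip (s-2) s (by omega)
  intro b hb
  have : b % (s-2) < s - 2 := Nat.mod_lt b (by omega)
  omega


lemma fiber0_card (m s : ℕ) (hm : 1 ≤ m) (hs : 3 ≤ s) :
    ((okSet s (m*s-2)).filter (fun B => vOf m s B = 0)).card
      = (okSet (s-1) (m*(s-1)-1)).card := by
  apply Finset.card_nbij' (phi0 s) (psi0 s)
  · intro B hB
    rw [Finset.mem_coe, Finset.mem_filter] at hB
    exact L_phi0 m s hm hs B hB.1 hB.2
  · intro B hB
    rw [Finset.mem_coe, Finset.mem_filter]
    exact ⟨(L_psi0 m s hm hs B hB).1, (L_psi0 m s hm hs B hB).2⟩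
  · intro B hB
    rw [Finset.mem_coe, Finset.mem_filter] at hB
    exact RT0a m s hm hs B hB.1 hB.2
  · intro B hB
    exact RT0b m s hm hs B hB

lemma fiberV_card (m s : ℕ) (hm : 1 ≤ m) (hs : 3 ≤ s) (v : ℕ) (hv1 : 1 ≤ v) (hv2 : v ≤ m - 1) :
    ((okSet s (m*s-2)).filter (fun B => vOf m s B = v)).card
      = (okSet (s-2) (m*(s-2)-1)).card := by
  apply Finset.card_nbij' (phiV s) (psiV s v)
  · intro B hB
    rw [Finset.mem_coe, Finset.mem_filter] at hB
    exact L_phiV m s hm hs B hB.1 (by omega)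
  · intro B hB
    rw [Finset.mem_coe, Finset.mem_filter]
    exact ⟨(L_psiV m s hm hs v hv1 hv2 B hB).1, (L_psiV m s hm hs v hv1 hv2 B hB).2⟩
  · intro B hB
    rw [Finset.mem_coe, Finset.mem_filter] at hB
    have := RTVa m s hm hs B hB.1 (by omega)
    rwa [hB.2] at this
  · intro B hB
    exact RTVb m s hm hs v hv1 hv2 B hB

theorem okSet_count (m s : ℕ) (hm : 1 ≤ m) (hs : 3 ≤ s) :
    (okSet s (m*s-2)).card
      = (okSet (s-1) (m*(s-1)-1)).card + (m-1) * (okSet (s-2) (m*(s-2)-1)).card := by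
  classical
  have hmap : ∀ B ∈ okSet s (m*s-2), vOf m s B ∈ Finset.range m := by
    intro B hB
    rw [Finset.mem_range]
    have := vOf_le m s hm hs B hB
    omega
  rw [Finset.card_eq_sum_card_fiberwise hmap]
  have hsplit : Finset.range m = insert 0 (Finset.Ico 1 m) := by
    ext x
    simp [Finset.mem_range, Finset.mem_Ico, Finset.mem_insert]
    omega
  rw [hsplit, Finset.sum_insert (by simp)]
  have h0 := fiber0_card m s hm hs
  have hrest : ∀ v ∈ Finset.Ico 1 m,
      ((okSet s (m*s-2)).filter (fun B => vOf m s B = v)).card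
        = (okSet (s-2) (m*(s-2)-1)).card := by
    intro v hv
    rw [Finset.mem_Ico] at hv
    exact fiberV_card m s hm hs v hv.1 (by omega)
  rw [Finset.sum_congr rfl hrest, Finset.sum_const, Nat.card_Ico, smul_eq_mul, h0]

end Core

theorem Eminus_eq_Eplus_combination (m : ℕ) (hm : 1 ≤ m) :
    let Eminus : ℕ → ℕ := fun s =>
      {l : List ℕ | IsPartition l ∧ l.Nodup ∧ IsCore s l ∧ IsCore (m * s - 1) l}.ncard
    let Eplus : ℕ → ℕ := fun s =>
      {l : List ℕ | IsPartition l ∧ l.Nodup ∧ IsCore s l ∧ IsCore (m * s + 1) l}.ncard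
    ∀ s, 3 ≤ s → Eminus s = Eplus (s - 1) + (m - 1) * Eplus (s - 2) := by
  intro Eminus Eplus s hs
  have hms : s ≤ m * s := Nat.le_mul_of_pos_left s hm
  have hminus : Eminus s = (Core.okSet s (m*s-2)).card := by
    apply Core.ncard_bridge s (m*s-1) (m*s-2)
    · exact fun B hg h0 h1 h2 => Core.bound_minus m s hm hs B hg h0 h1 h2
    · omega
  have hplus1 : Eplus (s-1) = (Core.okSet (s-1) (m*(s-1)-1)).card := by
    apply Core.ncard_bridge (s-1) (m*(s-1)+1) (m*(s-1)-1)
    · exact fun B hg h0 h1 h2 => Core.bound_plus m (s-1) hm (by omega) B hg h0 h1 h2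
    · omega
  have hplus2 : Eplus (s-2) = (Core.okSet (s-2) (m*(s-2)-1)).card := by
    apply Core.ncard_bridge (s-2) (m*(s-2)+1) (m*(s-2)-1)
    · exact fun B hg h0 h1 h2 => Core.bound_plus m (s-2) hm (by omega) B hg h0 h1 h2
    · omega
  rw [hminus, hplus1, hplus2]
  exact Core.okSet_count m s hm hs
end

section
/- A partition is self-conjugate with distinct parts if and only if it is a 2-core partition, i.e., a staircase partition of the form (k, k−1, …, 2, 1) for some k ≥ 0. -/
lemma len_filter_lt_range (m k : ℕ) :
    ((List.range k).filter (fun i => decide (i < m))).length = min m k := by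
  induction k with
  | zero => simp
  | succ k ih =>
    rw [List.range_succ, List.filter_append, List.length_append, ih]
    by_cases h : k < m <;> simp [h] <;> omega

lemma staircase_length (k : ℕ) : (staircase k).length = k := by simp [staircase]

lemma staircase_getD (k i : ℕ) : (staircase k).getD i 0 = k - i := by
  rcases lt_or_ge i k with h | h
  · rw [List.getD_eq_getElem _ _ (by simpa [staircase_length])]
    simp [staircase]
  · rw [List.getD_eq_default _ _ (by simpa [staircase_length])]
    omega

lemma staircase_filter (k j : ℕ) :
    ((staircase k).filter (fun x => decide (j < x))).length = k - j := by
  rw [← List.countP_eq_length_filter]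
  unfold staircase
  rw [List.countP_map]
  have : ((fun x => decide (j < x)) ∘ fun i => k - i) = fun i => decide (i < k - j) := by
    funext i; simp only [Function.comp]; by_cases h : j < k - i <;> simp [h] <;> omega
  rw [this, List.countP_eq_length_filter, len_filter_lt_range]
  omega

lemma conjugate_staircase (k : ℕ) : conjugate (staircase k) = staircase k := by
  have hh : (staircase k).headD 0 = k := by
    cases k with
    | zero => simp [staircase]
    | succ k => simp [staircase, List.range_succ_eq_map]
  unfold conjugate
  rw [hh]
  apply List.map_congr_left
  intro j hj
  rw [List.mem_range] at hj
  rw [staircase_filter]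

lemma staircase_nodup (k : ℕ) : (staircase k).Nodup := by
  apply List.Nodup.map_on _ (List.nodup_range (n := k))
  intro x hx y hy h
  rw [List.mem_range] at hx hy
  omega

lemma staircase_core (k : ℕ) : IsCore 2 (staircase k) := by
  rintro ⟨i, j, hj, hh⟩
  rw [staircase_getD] at hj
  unfold hookLength at hh
  rw [staircase_getD, staircase_filter] at hh
  omega

lemma head_forces_staircase (l : List ℕ) (hl : IsPartition l) (hnd : l.Nodup)
    (hhead : l.headD 0 = l.length) : l = staircase l.length := by
  set n := l.length with hn
  have hpw : l.Pairwise (· > ·) :=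
    (hl.1.and hnd).imp (fun h => lt_of_le_of_ne h.1 h.2.symm)
  have hget := List.pairwise_iff_get.1 hpw
  have hgetD : ∀ i j, i < j → j < n → l.getD j 0 < l.getD i 0 := by
    intro i j hij hj
    rw [List.getD_eq_getElem _ _ (lt_trans hij hj), List.getD_eq_getElem _ _ hj]
    exact hget ⟨i, lt_trans hij hj⟩ ⟨j, hj⟩ hij
  have key : ∀ d i, i + d < n → l.getD (i + d) 0 + d ≤ l.getD i 0 := by
    intro d
    induction d with
    | zero => simp
    | succ d ih =>
      intro i h
      have h1 : l.getD (i + (d + 1)) 0 < l.getD (i + d) 0 := hgetD _ _ (by omega) h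
      have h2 := ih i (by omega)
      omega
  have hpos : ∀ i, i < n → 1 ≤ l.getD i 0 := by
    intro i hi
    rw [List.getD_eq_getElem _ _ hi]
    exact hl.2 _ (l.get_mem ⟨i, hi⟩)
  have h0 : l.getD 0 0 = n := by
    rw [← hhead]; cases l <;> simp
  have hub : ∀ i, i < n → l.getD i 0 ≤ n - i := by
    intro i hi
    have := key i 0 (by omega)
    simp only [Nat.zero_add] at this
    omega
  have hlb : ∀ i, i < n → n - i ≤ l.getD i 0 := by
    intro i hi
    have h1 := key (n - 1 - i) i (by omega)
    have h2 := hpos (i + (n - 1 - i)) (by omega)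
    omega
  apply List.ext_get (by rw [staircase_length])
  intro i h1 h2
  have e1 : l.get ⟨i, h1⟩ = l.getD i 0 := (List.getD_eq_getElem _ 0 h1).symm
  have e2 : (staircase n).get ⟨i, h2⟩ = (staircase n).getD i 0 :=
    (List.getD_eq_getElem _ 0 h2).symm
  rw [e1, e2, staircase_getD]
  have := hub i h1
  have := hlb i h1
  omega

theorem selfConjugate_distinct_iff_two_core (l : List ℕ) (hl : IsPartition l) :
    (SelfConjugate l ∧ l.Nodup) ↔ (IsCore 2 l ∧ ∃ k, l = staircase k) := by
  constructor
  · rintro ⟨hsc, hnd⟩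
    have hhead : l.headD 0 = l.length := by
      have := congrArg List.length hsc
      simpa [conjugate] using this
    have hst := head_forces_staircase l hl hnd hhead
    exact ⟨hst ▸ staircase_core l.length, l.length, hst⟩
  · rintro ⟨-, k, rfl⟩
    exact ⟨conjugate_staircase k, staircase_nodup k⟩
end

section
/- For m ≥ 1 and α ≥ 1, the number of self-conjugate partitions with distinct parts that are simultaneously (2α+1)-core and ((2α+1)m − 1)-core equals α + 1. -/
lemma range_filter_lt_length (k m : ℕ) :
    ((List.range k).filter (fun i => decide (i < m))).length = min m k := by
  induction k with
  | zero => simp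
  | succ n ih =>
      rw [List.range_succ, List.filter_append, List.length_append, ih]
      by_cases h : n < m <;> simp [h] <;> omega

lemma staircase_filter_len (k j : ℕ) :
    ((staircase k).filter (fun x => j < x)).length = k - j := by
  unfold staircase
  rw [List.filter_map, List.length_map]
  have : ∀ i ∈ List.range k, ((fun x => decide (j < x)) ∘ (fun i => k - i)) i
      = (fun i => decide (i < k - j)) i := by
    intro i hi
    simp only [List.mem_range] at hi
    simp only [Function.comp]
    by_cases h : j < k - i
    · rw [decide_eq_true h, decide_eq_true (by omega)]
    · rw [decide_eq_false h, decide_eq_false (by omega)]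
  rw [List.filter_congr this, range_filter_lt_length]
  omega

lemma headD_eq_getD (l : List ℕ) : l.headD 0 = l.getD 0 0 := by cases l <;> rfl

lemma staircase_headD (k : ℕ) : (staircase k).headD 0 = k := by
  rw [headD_eq_getD, staircase_getD]; omega

lemma staircase_sorted (k : ℕ) : (staircase k).Pairwise (· > ·) := by
  rw [List.pairwise_iff_getElem]
  intro i j hi hj hij
  simp only [staircase, List.getElem_map, List.getElem_range] at *
  simp only [staircase, List.length_map, List.length_range] at hi hj
  omega

lemma hookLength_staircase (k i j : ℕ) (h : i + j < k) :
    hookLength (staircase k) i j = 2 * (k - i - j) - 1 := by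
  unfold hookLength
  rw [staircase_getD, staircase_filter_len]
  omega

lemma eq_staircase_of_selfConj (l : List ℕ) (hp : IsPartition l) (hsc : SelfConjugate l)
    (hnd : l.Nodup) : l = staircase l.length := by
  have hlen : l.headD 0 = l.length := by
    have := congrArg List.length hsc
    simpa [conjugate] using this
  have hstrict : l.Pairwise (· > ·) := by
    have h2 : l.Pairwise (· ≠ ·) := hnd
    exact (hp.1.and h2).imp (fun h => lt_of_le_of_ne h.1 h.2.symm)
  rw [List.pairwise_iff_getElem] at hstrict
  have hstrictD : ∀ i j, i < j → j < l.length → l.getD j 0 < l.getD i 0 := by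
    intro i j hij hj
    rw [List.getD_eq_getElem _ _ hj, List.getD_eq_getElem _ _ (show i < l.length by omega)]
    exact hstrict i j (by omega) hj hij
  have hgap : ∀ d i, i + d < l.length → l.getD (i + d) 0 + d ≤ l.getD i 0 := by
    intro d
    induction d with
    | zero => intro i h; simp
    | succ e ih =>
        intro i h
        have h1 := ih i (by omega)
        have h2 := hstrictD (i + e) (i + e + 1) (by omega) (by omega)
        have h3 : i + (e + 1) = i + e + 1 := by omega
        rw [h3]
        omega
  rcases Nat.eq_zero_or_pos l.length with h0 | hpos
  · have hnil : l = [] := List.length_eq_zero_iff.mp h0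
    rw [hnil]; simp [hnil, staircase]
  have h00 : l.getD 0 0 = l.length := by rw [← headD_eq_getD]; exact hlen
  have hlast : 1 ≤ l.getD (l.length - 1) 0 := by
    rw [List.getD_eq_getElem _ _ (by omega)]
    exact hp.2 _ (List.getElem_mem _)
  refine List.ext_getElem (by rw [staircase_length]) (fun i hi hi2 => ?_)
  have hub : l.getD i 0 + i ≤ l.length := by
    have := hgap i 0 (by omega)
    simp only [Nat.zero_add] at this
    omega
  have hlb : l.length - i ≤ l.getD i 0 := by
    have h3 := hgap (l.length - 1 - i) i (by omega)
    rw [show i + (l.length - 1 - i) = l.length - 1 from by omega] at h3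
    omega
  rw [← List.getD_eq_getElem l 0 hi, ← List.getD_eq_getElem _ 0 hi2, staircase_getD]
  omega

lemma staircase_isPartition (k : ℕ) : IsPartition (staircase k) := by
  constructor
  · exact (staircase_sorted k).imp (fun h => le_of_lt h)
  · intro x hx
    simp only [staircase, List.mem_map, List.mem_range] at hx
    obtain ⟨i, hi, rfl⟩ := hx
    omega

lemma staircase_hook_shape (k s : ℕ) (h : HasHook (staircase k) s) :
    ∃ t, 1 ≤ t ∧ t ≤ k ∧ s = 2 * t - 1 := by
  obtain ⟨i, j, hj, hs⟩ := h
  rw [staircase_getD] at hj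
  rw [hookLength_staircase k i j (by omega)] at hs
  exact ⟨k - i - j, by omega, by omega, hs.symm⟩

lemma staircase_hasHook (k t : ℕ) (h1 : 1 ≤ t) (h2 : t ≤ k) :
    HasHook (staircase k) (2 * t - 1) := by
  refine ⟨0, k - t, ?_, ?_⟩
  · rw [staircase_getD]; omega
  · rw [hookLength_staircase k 0 (k - t) (by omega)]
    omega

theorem selfConjugate_distinct_odd_minus (m α : ℕ) (hm : 1 ≤ m) (hα : 1 ≤ α) :
    {l : List ℕ | IsPartition l ∧ SelfConjugate l ∧ l.Nodup ∧
      IsCore (2 * α + 1) l ∧ IsCore ((2 * α + 1) * m - 1) l}.ncard = α + 1 := by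
  have hset : {l : List ℕ | IsPartition l ∧ SelfConjugate l ∧ l.Nodup ∧
      IsCore (2 * α + 1) l ∧ IsCore ((2 * α + 1) * m - 1) l} = staircase '' Set.Iic α := by
    ext l
    simp only [Set.mem_setOf_eq, Set.mem_image, Set.mem_Iic]
    constructor
    · rintro ⟨hp, hsc, hnd, hc1, hc2⟩
      obtain ⟨n, hl⟩ : ∃ n, l = staircase n := ⟨l.length, eq_staircase_of_selfConj l hp hsc hnd⟩
      subst hl
      refine ⟨n, ?_, rfl⟩
      by_contra hcon
      push_neg at hcon
      have := staircase_hasHook n (α + 1) (by omega) (by omega)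
      rw [show 2 * (α + 1) - 1 = 2 * α + 1 from by omega] at this
      exact hc1 this
    · rintro ⟨k, hk, rfl⟩
      refine ⟨staircase_isPartition k, conjugate_staircase k, staircase_nodup k, ?_, ?_⟩
      · intro hh
        obtain ⟨t, ht1, ht2, hts⟩ := staircase_hook_shape k _ hh
        omega
      · intro hh
        obtain ⟨t, ht1, ht2, hts⟩ := staircase_hook_shape k _ hh
        rcases Nat.lt_or_ge m 2 with h | h
        · have : m = 1 := by omega
          subst this
          omega
        · have : (2 * α + 1) * 2 ≤ (2 * α + 1) * m := Nat.mul_le_mul_left _ h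
          omega
  rw [hset, Set.ncard_image_of_injOn, ← Finset.coe_Iic, Set.ncard_coe_finset, Nat.card_Iic]
  intro a _ b _ hab
  have := congrArg List.length hab
  rwa [staircase_length, staircase_length] at this
end
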